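/- arXiv:2508.18473 — 5 statements merged into one kernel-verified Lean document; each statement's English description precedes it below -/
import Mathlib

section
/- If a test score T is exchangeable with calibration scores S_1,...,S_n (all i.i.d. from a continuous distribution), then the conformal p-value Q = (1 + |{i : S_i ≥ T}|)/(n+1) satisfies P(Q ≤ t) ≤ t for all t ∈ [0,1], i.e., Q is super-uniform (a valid p-value). -/
open MeasureTheory ProbabilityTheory Finset
open scoped ENNReal

namespace ConformalAux

/-- count of strict exceedances of coordinate `m` -/
noncomputable def cnt (n : ℕ) (m : Fin (n + 1)) (x : Fin (n + 1) → ℝ) : ℕ :=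
  (univ.filter fun i => x m < x i).card

lemma measurable_cnt (n : ℕ) (m : Fin (n + 1)) :
    Measurable fun x : Fin (n + 1) → ℝ => cnt n m x := by
  unfold cnt
  simp_rw [Finset.card_filter]
  apply Finset.measurable_sum
  intro i _
  exact Measurable.ite
    (measurableSet_lt (measurable_pi_apply m) (measurable_pi_apply i))
    measurable_const measurable_const

lemma cnt_comp (n : ℕ) (σ : Equiv.Perm (Fin (n + 1))) (m : Fin (n + 1))
    (x : Fin (n + 1) → ℝ) : cnt n m (x ∘ σ) = cnt n (σ m) x := by
  unfold cnt
  apply Finset.card_bij (fun i _ => σ i)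
  · intro a ha
    simp only [mem_filter, mem_univ, true_and, Function.comp_apply] at ha ⊢
    exact ha
  · intro a _ b _ h
    exact σ.injective h
  · intro b hb
    refine ⟨σ.symm b, ?_, by simp⟩
    simp only [mem_filter, mem_univ, true_and, Function.comp_apply] at hb ⊢
    simpa using hb

lemma cnt_inj_of_injective {n : ℕ} {x : Fin (n + 1) → ℝ}
    (hx : Function.Injective x) : Function.Injective fun m => cnt n m x := by
  have key : ∀ m m', x m < x m' → cnt n m' x < cnt n m x := by
    intro m m' h
    apply Finset.card_lt_card
    rw [Finset.ssubset_iff_of_subset]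
    · refine ⟨m', ?_, ?_⟩
      · simp [cnt, h]
      · simp [cnt]
    · intro i hi
      simp only [cnt, mem_filter, mem_univ, true_and] at hi ⊢
      exact h.trans hi
  intro m m' h
  by_contra hne
  have hxne : x m ≠ x m' := fun he => hne (hx he)
  rcases hxne.lt_or_gt with h1 | h1
  · exact (key m m' h1).ne h.symm
  · exact (key m' m h1).ne h

lemma map_eq_pi {Ω : Type*} [MeasurableSpace Ω] (μ : Measure Ω) [IsProbabilityMeasure μ]
    {n : ℕ} (X : Fin (n + 1) → Ω → ℝ) (ν : Measure ℝ) [IsProbabilityMeasure ν]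
    (hmeas : ∀ i, Measurable (X i))
    (hiid : iIndepFun X μ)
    (hlaw : ∀ i, Measure.map (X i) μ = ν) :
    Measure.map (fun ω i => X i ω) μ = Measure.pi fun _ => ν := by
  refine (Measure.pi_eq fun s hs => ?_).symm
  rw [Measure.map_apply (measurable_pi_lambda _ hmeas) (MeasurableSet.univ_pi hs)]
  have hpre : (fun ω i => X i ω) ⁻¹' Set.pi Set.univ s = ⋂ i ∈ Finset.univ, X i ⁻¹' s i := by
    ext ω
    simp [Set.mem_pi]
  rw [hpre, hiid.measure_inter_preimage_eq_mul Finset.univ (fun i hi => hs i)]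
  refine Finset.prod_congr rfl fun i _ => ?_
  rw [← hlaw i, Measure.map_apply (hmeas i) (hs i)]

lemma pi_comp_perm {n : ℕ} (ν : Measure ℝ) [IsProbabilityMeasure ν]
    (σ : Equiv.Perm (Fin (n + 1))) :
    MeasurePreserving (fun x : Fin (n + 1) → ℝ => x ∘ σ)
      (Measure.pi fun _ => ν) (Measure.pi fun _ => ν) := by
  have h := measurePreserving_piCongrLeft (fun _ : Fin (n + 1) => ν) σ.symm
  have heq : ⇑(MeasurableEquiv.piCongrLeft (fun _ : Fin (n + 1) => ℝ) σ.symm)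
      = fun x : Fin (n + 1) → ℝ => x ∘ σ := by
    funext x
    funext j
    have h2 := MeasurableEquiv.piCongrLeft_apply_apply (β := fun _ : Fin (n + 1) => ℝ)
      σ.symm x (σ j)
    simpa using h2
  rw [heq] at h
  exact h

lemma eq_null {Ω : Type*} [MeasurableSpace Ω] (μ : Measure Ω) [IsProbabilityMeasure μ]
    {f g : Ω → ℝ} (hf : Measurable f) (hg : Measurable g)
    (hind : IndepFun f g μ) (ν : Measure ℝ) [IsProbabilityMeasure ν] [NullSingletonClass ν]
    (hfl : Measure.map f μ = ν) (hgl : Measure.map g μ = ν) :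
    μ {ω | f ω = g ω} = 0 := by
  have hmap : Measure.map (fun ω => (f ω, g ω)) μ = ν.prod ν := by
    rw [(indepFun_iff_map_prod_eq_prod_map_map hf.aemeasurable hg.aemeasurable).mp hind,
      hfl, hgl]
  have hdiag : MeasurableSet {p : ℝ × ℝ | p.1 = p.2} :=
    measurableSet_eq_fun measurable_fst measurable_snd
  have h1 : μ {ω | f ω = g ω} = (ν.prod ν) {p | p.1 = p.2} := by
    rw [← hmap, Measure.map_apply (hf.prodMk hg) hdiag]
    rfl
  rw [h1, Measure.prod_apply hdiag]
  have h2 : ∀ a : ℝ, (Prod.mk a ⁻¹' {p : ℝ × ℝ | p.1 = p.2}) = {a} := by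
    intro a
    ext b
    simp [eq_comm]
  simp_rw [h2, measure_singleton]
  simp

lemma card_eq_cnt {n : ℕ} (x : Fin (n + 1) → ℝ) (hx : Function.Injective x) :
    (univ.filter fun i : Fin n => x (Fin.last n) ≤ x i.castSucc).card
      = cnt n (Fin.last n) x := by
  unfold cnt
  apply Finset.card_bij (fun (i : Fin n) _ => i.castSucc)
  · intro a ha
    simp only [mem_filter, mem_univ, true_and] at ha ⊢
    refine lt_of_le_of_ne ha fun he => ?_
    exact (Fin.castSucc_lt_last a).ne (hx he).symm
  · intro a _ b _ h
    exact Fin.castSucc_injective n h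
  · intro b hb
    simp only [mem_filter, mem_univ, true_and] at hb
    have hbne : b ≠ Fin.last n := fun he => lt_irrefl _ (he ▸ hb)
    obtain ⟨j, hj⟩ := Fin.exists_castSucc_eq.mpr hbne
    exact ⟨j, by simp [hj, hb.le], hj⟩

end ConformalAux

open ConformalAux

/-- If a test score `T` is exchangeable with calibration scores `S 1, ..., S n`
(all i.i.d. from a continuous, i.e. atomless, distribution `ν`), then the conformal p-value
`Q = (1 + #{i : S i ≥ T}) / (n+1)` is super-uniform: `P(Q ≤ t) ≤ t` for all `t ∈ [0,1]`. -/
theorem conformal_p_value_super_uniform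
    {Ω : Type*} [MeasurableSpace Ω] (μ : Measure Ω) [IsProbabilityMeasure μ]
    (n : ℕ) (X : Fin (n + 1) → Ω → ℝ) (ν : Measure ℝ) [IsProbabilityMeasure ν] [NullSingletonClass ν]
    (hmeas : ∀ i, Measurable (X i))
    (hiid : iIndepFun X μ)
    (hlaw : ∀ i, Measure.map (X i) μ = ν)
    (S : Fin n → Ω → ℝ) (T : Ω → ℝ)
    (hS : ∀ i : Fin n, S i = X i.castSucc) (hT : T = X (Fin.last n))
    (Q : Ω → ℝ)
    (hQ : ∀ ω, Q ω = (1 + ((univ.filter fun i : Fin n => T ω ≤ S i ω).card : ℝ)) / (n + 1)) :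
    ∀ t ∈ Set.Icc (0 : ℝ) 1, μ {ω | Q ω ≤ t} ≤ ENNReal.ofReal t := by
  intro t ht
  classical
  obtain ⟨ht0, ht1⟩ := ht
  set π : Measure (Fin (n + 1) → ℝ) := Measure.pi fun _ => ν with hπdef
  set V : Ω → Fin (n + 1) → ℝ := fun ω i => X i ω with hVdef
  have hVmeas : Measurable V := measurable_pi_lambda _ hmeas
  have hmap : Measure.map V μ = π := map_eq_pi μ X ν hmeas hiid hlaw
  -- the set of injective (tie-free) configurations
  set I : Set (Fin (n + 1) → ℝ) := {x | Function.Injective x} with hIdef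
  have hIcompl : Iᶜ = ⋃ (i : Fin (n + 1)), ⋃ (j : Fin (n + 1)), ⋃ (_ : i ≠ j),
      {x : Fin (n + 1) → ℝ | x i = x j} := by
    ext x
    simp only [hIdef, Set.mem_compl_iff, Set.mem_setOf_eq, Function.Injective,
      Set.mem_iUnion, not_forall]
    constructor
    · rintro ⟨i, j, hij, hne⟩
      exact ⟨i, j, hne, hij⟩
    · rintro ⟨i, j, hne, hij⟩
      exact ⟨i, j, hij, hne⟩
  have hImeas : MeasurableSet I := by
    rw [← compl_compl I, hIcompl]
    apply MeasurableSet.compl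
    refine MeasurableSet.iUnion fun i => MeasurableSet.iUnion fun j =>
      MeasurableSet.iUnion fun _ => ?_
    exact measurableSet_eq_fun (measurable_pi_apply i) (measurable_pi_apply j)
  have hIcnull : π Iᶜ = 0 := by
    rw [hIcompl]
    refine measure_iUnion_null fun i => measure_iUnion_null fun j =>
      measure_iUnion_null fun hij => ?_
    have hsm : MeasurableSet {x : Fin (n + 1) → ℝ | x i = x j} :=
      measurableSet_eq_fun (measurable_pi_apply i) (measurable_pi_apply j)
    rw [← hmap, Measure.map_apply hVmeas hsm]
    have hpre : V ⁻¹' {x : Fin (n + 1) → ℝ | x i = x j} = {ω | X i ω = X j ω} := rfl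
    rw [hpre]
    exact eq_null μ (hmeas i) (hmeas j) (hiid.indepFun hij) ν (hlaw i) (hlaw j)
  -- the per-rank events
  set A : ℕ → Fin (n + 1) → Set (Fin (n + 1) → ℝ) :=
    fun j m => {x | cnt n m x = j} ∩ I with hAdef
  have hAmeas : ∀ j m, MeasurableSet (A j m) := fun j m =>
    ((measurable_cnt n m) (measurableSet_singleton j)).inter hImeas
  have hrank : ∀ j : ℕ, ((n : ℝ≥0∞) + 1) * π (A j (Fin.last n)) ≤ 1 := by
    intro j
    have hdisj : Pairwise (Function.onFun Disjoint (A j)) := by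
      intro m m' hmm'
      refine Set.disjoint_left.mpr fun x hx hx' => ?_
      exact hmm' (cnt_inj_of_injective hx.2 (hx.1.trans hx'.1.symm))
    have hsum : ∑ m, π (A j m) = π (⋃ m, A j m) := by
      rw [measure_iUnion hdisj (hAmeas j), tsum_fintype]
    have hle1 : ∑ m, π (A j m) ≤ 1 := by
      rw [hsum]
      exact prob_le_one
    have hequal : ∀ m, π (A j m) = π (A j (Fin.last n)) := by
      intro m
      set σ : Equiv.Perm (Fin (n + 1)) := Equiv.swap (Fin.last n) m with hσdef
      have hmp := pi_comp_perm ν σ (n := n)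
      have hset : A j m = (fun x : Fin (n + 1) → ℝ => x ∘ σ) ⁻¹' A j (Fin.last n) := by
        ext x
        simp only [hAdef, Set.mem_preimage, Set.mem_inter_iff, Set.mem_setOf_eq, hIdef]
        rw [cnt_comp n σ (Fin.last n) x]
        have hσlast : σ (Fin.last n) = m := Equiv.swap_apply_left _ _
        rw [hσlast]
        constructor
        · rintro ⟨h1, h2⟩
          exact ⟨h1, h2.comp σ.injective⟩
        · rintro ⟨h1, h2⟩
          exact ⟨h1, (Equiv.injective_comp σ x).mp h2⟩
      rw [hset, hmp.measure_preimage (hAmeas j (Fin.last n)).nullMeasurableSet]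
    calc ((n : ℝ≥0∞) + 1) * π (A j (Fin.last n))
        = ∑ _m : Fin (n + 1), π (A j (Fin.last n)) := by
          rw [Finset.sum_const, Finset.card_univ, Fintype.card_fin, nsmul_eq_mul]
          push_cast
          ring
      _ = ∑ m, π (A j m) := by
          exact (Finset.sum_congr rfl fun m _ => (hequal m)).symm
      _ ≤ 1 := hle1
  -- rewrite the event
  set k : ℕ := ⌊t * (n + 1)⌋₊ with hkdef
  have htn0 : (0 : ℝ) ≤ t * (n + 1) := by positivity
  have hQset : {ω | Q ω ≤ t} = V ⁻¹'
      {x : Fin (n + 1) → ℝ |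
        1 + ((univ.filter fun i : Fin n => x (Fin.last n) ≤ x i.castSucc).card : ℝ)
          ≤ t * (n + 1)} := by
    ext ω
    simp only [Set.mem_setOf_eq, Set.mem_preimage, hQ]
    rw [div_le_iff₀ (by positivity)]
    have hST : ∀ i : Fin n, (T ω ≤ S i ω) = (V ω (Fin.last n) ≤ V ω i.castSucc) := by
      intro i
      rw [hS i, hT]
    simp_rw [hST]
  -- main estimate
  have hsubset : {x : Fin (n + 1) → ℝ |
        1 + ((univ.filter fun i : Fin n => x (Fin.last n) ≤ x i.castSucc).card : ℝ)
          ≤ t * (n + 1)} ∩ I ⊆ ⋃ j ∈ Finset.range k, A j (Fin.last n) := by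
    rintro x ⟨hx1, hx2⟩
    simp only [Set.mem_setOf_eq] at hx1
    have hcard := card_eq_cnt x hx2
    have hle : ((cnt n (Fin.last n) x + 1 : ℕ) : ℝ) ≤ t * (n + 1) := by
      push_cast
      rw [← hcard]
      linarith
    have hfl : cnt n (Fin.last n) x + 1 ≤ k := Nat.le_floor hle
    have hck : cnt n (Fin.last n) x < k := by omega
    refine Set.mem_iUnion₂.mpr ⟨cnt n (Fin.last n) x, Finset.mem_range.mpr hck, rfl, hx2⟩
  have hsplit : {ω | Q ω ≤ t} ⊆
      V ⁻¹' (⋃ j ∈ Finset.range k, A j (Fin.last n)) ∪ V ⁻¹' Iᶜ := by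
    rw [hQset]
    intro ω hω
    by_cases hI : V ω ∈ I
    · exact Or.inl (hsubset ⟨hω, hI⟩)
    · exact Or.inr hI
  have hUmeas : MeasurableSet (⋃ j ∈ Finset.range k, A j (Fin.last n)) :=
    MeasurableSet.biUnion (Finset.range k).countable_toSet fun j _ => hAmeas j _
  have hbound : μ {ω | Q ω ≤ t} ≤ ∑ j ∈ Finset.range k, π (A j (Fin.last n)) := by
    calc μ {ω | Q ω ≤ t}
        ≤ μ (V ⁻¹' (⋃ j ∈ Finset.range k, A j (Fin.last n))) + μ (V ⁻¹' Iᶜ) :=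
          (measure_mono hsplit).trans (measure_union_le _ _)
      _ = π (⋃ j ∈ Finset.range k, A j (Fin.last n)) + π Iᶜ := by
          rw [← hmap, Measure.map_apply hVmeas hUmeas,
            Measure.map_apply hVmeas hImeas.compl]
      _ = π (⋃ j ∈ Finset.range k, A j (Fin.last n)) := by rw [hIcnull, add_zero]
      _ ≤ ∑ j ∈ Finset.range k, π (A j (Fin.last n)) := measure_biUnion_finset_le _ _
  -- arithmetic conclusion
  have hkle : (k : ℝ≥0∞) ≤ ((n : ℝ≥0∞) + 1) * ENNReal.ofReal t := by
    have h1 : (k : ℝ) ≤ t * (n + 1) := Nat.floor_le htn0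
    have h2 : (k : ℝ≥0∞) = ENNReal.ofReal (k : ℝ) := by
      rw [ENNReal.ofReal_natCast]
    rw [h2]
    calc ENNReal.ofReal (k : ℝ) ≤ ENNReal.ofReal (t * (n + 1)) := ENNReal.ofReal_le_ofReal h1
      _ = ENNReal.ofReal t * ENNReal.ofReal ((n : ℝ) + 1) := ENNReal.ofReal_mul ht0
      _ = ((n : ℝ≥0∞) + 1) * ENNReal.ofReal t := by
          rw [mul_comm]
          congr 1
          rw [ENNReal.ofReal_add (by positivity) zero_le_one]
          simp [ENNReal.ofReal_natCast]
  have hmul : ((n : ℝ≥0∞) + 1) * μ {ω | Q ω ≤ t} ≤ ((n : ℝ≥0∞) + 1) * ENNReal.ofReal t := by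
    calc ((n : ℝ≥0∞) + 1) * μ {ω | Q ω ≤ t}
        ≤ ((n : ℝ≥0∞) + 1) * ∑ j ∈ Finset.range k, π (A j (Fin.last n)) := by
          exact mul_le_mul_right hbound _
      _ = ∑ j ∈ Finset.range k, ((n : ℝ≥0∞) + 1) * π (A j (Fin.last n)) := by
          rw [Finset.mul_sum]
      _ ≤ ∑ _j ∈ Finset.range k, (1 : ℝ≥0∞) := Finset.sum_le_sum fun j _ => hrank j
      _ = (k : ℝ≥0∞) := by simp
      _ ≤ ((n : ℝ≥0∞) + 1) * ENNReal.ofReal t := hkle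
  have hn0 : ((n : ℝ≥0∞) + 1) ≠ 0 := by simp
  have hntop : ((n : ℝ≥0∞) + 1) ≠ ⊤ := by
    simp [ENNReal.add_ne_top]
  exact (ENNReal.mul_le_mul_iff_right hn0 hntop).mp hmul
end

section
/- Suppose Q^1,...,Q^K are (possibly dependent) valid p-values, i.e., P(Q^j ≤ t) ≤ t for all t ∈ [0,1] and each j. Let Q^{(1)} ≤ ... ≤ Q^{(K)} denote their order statistics. Then the probability that there exists j with Q^{(j)} ≤ (α/(H_K)) · (j/K), where H_K = Σ_{i=1}^K 1/i, is at most α. That is, the BH-style global null test controls the false alarm rate at level α under arbitrary dependence. -/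
open MeasureTheory Finset
open scoped ENNReal

/-- The `j`-th order statistic (smallest is `j = 0`) of the finite family `q : Fin K → ℝ`. -/
noncomputable def orderStat {K : ℕ} (q : Fin K → ℝ) (j : Fin K) : ℝ :=
  ((Multiset.map q Finset.univ.val).sort (· ≤ ·)).get
    ⟨j, by simp⟩

/-- Auxiliary coefficients for the Abel-summation (Benjamini–Yekutieli) argument. -/
noncomputable def eAux (K m : ℕ) : ℝ :=
  if m + 1 = K then 1 / K else 1 / (m + 1) - 1 / (m + 2)

lemma eAux_nonneg (K m : ℕ) : 0 ≤ eAux K m := by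
  unfold eAux
  split
  · positivity
  · have h : (1:ℝ) / (m + 2) ≤ 1 / (m + 1) := by
      apply one_div_le_one_div_of_le
      · positivity
      · push_cast; linarith
    linarith

lemma tel_sum (n : ℕ) :
    ∑ m ∈ Finset.range n, ((1 : ℝ) / (m + 1) - 1 / (m + 2)) = 1 - 1 / (n + 1) := by
  induction n with
  | zero => simp
  | succ n ih =>
    rw [Finset.sum_range_succ, ih]
    have h1 : ((n : ℝ) + 1) ≠ 0 := by positivity
    have h2 : ((n : ℝ) + 2) ≠ 0 := by positivity
    push_cast
    field_simp
    ring

lemma eAux_sum_Ico {K k : ℕ} (hk : k < K) :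
    ∑ m ∈ Finset.Ico k K, eAux K m = 1 / ((k : ℝ) + 1) := by
  obtain ⟨N, rfl⟩ : ∃ N, K = N + 1 := ⟨K - 1, by omega⟩
  have hkN : k ≤ N := by omega
  rw [Finset.sum_Ico_succ_top hkN]
  have h1 : eAux (N + 1) N = 1 / ((N : ℝ) + 1) := by simp [eAux]
  have h2 : ∀ m ∈ Finset.Ico k N,
      eAux (N + 1) m = (1 : ℝ) / (m + 1) - 1 / (m + 2) := by
    intro m hm
    have hm' : m < N := (Finset.mem_Ico.mp hm).2
    have hne : m + 1 ≠ N + 1 := by omega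
    simp only [eAux, hne, if_false]
  rw [Finset.sum_congr rfl h2, Finset.sum_Ico_eq_sub _ hkN, tel_sum, tel_sum, h1]
  have h3 : ((k : ℝ) + 1) ≠ 0 := by positivity
  have h4 : ((N : ℝ) + 1) ≠ 0 := by positivity
  field_simp
  ring

lemma eAux_weighted_sum (K : ℕ) (hK : 0 < K) :
    ∑ m ∈ Finset.range K, eAux K m * ((m : ℝ) + 1)
      = ∑ i ∈ Finset.range K, (1 : ℝ) / (i + 1) := by
  obtain ⟨N, rfl⟩ : ∃ N, K = N + 1 := ⟨K - 1, by omega⟩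
  rw [Finset.sum_range_succ, Finset.sum_range_succ']
  have h1 : eAux (N + 1) N * ((N : ℝ) + 1) = 1 := by
    simp only [eAux, if_pos rfl]
    have : ((N : ℝ) + 1) ≠ 0 := by positivity
    push_cast
    field_simp
  have h2 : ∀ m ∈ Finset.range N,
      eAux (N + 1) m * ((m : ℝ) + 1) = (1 : ℝ) / (((m + 1 : ℕ) : ℝ) + 1) := by
    intro m hm
    have hm' : m < N := Finset.mem_range.mp hm
    have hne : m + 1 ≠ N + 1 := by omega
    simp only [eAux, hne, if_false]
    have ha : ((m : ℝ) + 1) ≠ 0 := by positivity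
    have hb : ((m : ℝ) + 2) ≠ 0 := by positivity
    push_cast
    field_simp
    ring
  rw [Finset.sum_congr rfl h2, h1]
  norm_num

lemma orderStat_count {K : ℕ} (q : Fin K → ℝ) (j : Fin K) {t : ℝ}
    (h : orderStat q j ≤ t) :
    (j : ℕ) + 1 ≤ (Finset.univ.filter fun i => q i ≤ t).card := by
  classical
  set M : Multiset ℝ := Multiset.map q Finset.univ.val with hM
  set L : List ℝ := M.sort (· ≤ ·) with hLdef
  have hlen : L.length = K := by
    rw [hLdef, Multiset.length_sort, hM]
    simp
  have hsorted : L.Pairwise (· ≤ ·) := Multiset.pairwise_sort _ _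
  have hj : (j : ℕ) < L.length := by rw [hlen]; exact j.isLt
  have hgetj : L.get ⟨(j : ℕ), hj⟩ ≤ t := h
  -- card of the filter equals countP of the sorted list
  have hcard : (Finset.univ.filter fun i => q i ≤ t).card
      = L.countP (fun x => decide (x ≤ t)) := by
    have h1 : (Finset.univ.filter fun i => q i ≤ t).card
        = Multiset.countP (fun x => x ≤ t) M := by
      rw [hM, Multiset.countP_map]
      rfl
    have h2 : (L : Multiset ℝ) = M := Multiset.sort_eq _ _
    rw [h1, ← h2]
    rfl
  rw [hcard]
  have htake : ∀ a ∈ L.take ((j : ℕ) + 1), (fun x => decide (x ≤ t)) a = true := by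
    intro a ha
    obtain ⟨n, hn, rfl⟩ := List.mem_iff_getElem.mp ha
    rw [List.getElem_take]
    have hn' : n < L.length := by
      rw [List.length_take] at hn; omega
    have hnj : n ≤ (j : ℕ) := by
      rw [List.length_take] at hn; omega
    have hle : L.get ⟨n, hn'⟩ ≤ L.get ⟨(j : ℕ), hj⟩ :=
      hsorted.rel_get_of_le hnj
    simpa using le_trans hle hgetj
  have hlen_take : (L.take ((j : ℕ) + 1)).length = (j : ℕ) + 1 := by
    rw [List.length_take]; omega
  have hcount_take : (L.take ((j : ℕ) + 1)).countP (fun x => decide (x ≤ t))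
      = (j : ℕ) + 1 := by
    rw [List.countP_eq_length.mpr htake, hlen_take]
  calc (j : ℕ) + 1 = (L.take ((j : ℕ) + 1)).countP (fun x => decide (x ≤ t)) :=
        hcount_take.symm
    _ ≤ L.countP (fun x => decide (x ≤ t)) := by
        conv_rhs => rw [← List.take_append_drop ((j : ℕ) + 1) L]
        rw [List.countP_append]
        exact Nat.le_add_right _ _

/-- If `Q 1, ..., Q K` are (possibly dependent) valid p-values, then the BH-style
global null test rejecting when some order statistic `Q⁽ʲ⁾ ≤ (α / H_K) · (j / K)`
(`H_K` the `K`-th harmonic number) has false alarm probability at most `α`. -/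
theorem BH_global_null_false_alarm
    {Ω : Type*} [MeasurableSpace Ω] (μ : Measure Ω) [IsProbabilityMeasure μ]
    (K : ℕ) (hK : 0 < K) (Q : Fin K → Ω → ℝ)
    (hmeas : ∀ j, Measurable (Q j))
    (h01 : ∀ j ω, Q j ω ∈ Set.Icc (0 : ℝ) 1)
    (hvalid : ∀ j, ∀ t ∈ Set.Icc (0 : ℝ) 1, μ {ω | Q j ω ≤ t} ≤ ENNReal.ofReal t)
    (α : ℝ) (hα : α ∈ Set.Ioo (0 : ℝ) 1)
    (H : ℝ) (hH : H = ∑ i ∈ Finset.range K, (1 : ℝ) / (i + 1)) :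
    μ {ω | ∃ j : Fin K, orderStat (fun i => Q i ω) j ≤ (α / H) * (((j : ℕ) + 1) / K)}
      ≤ ENNReal.ofReal α := by
  classical
  obtain ⟨hα0, hα1⟩ := hα
  have hH1 : (1 : ℝ) ≤ H := by
    rw [hH]
    calc (1 : ℝ) = 1 / (((0 : ℕ) : ℝ) + 1) := by norm_num
      _ ≤ ∑ i ∈ Finset.range K, (1 : ℝ) / (i + 1) :=
        Finset.single_le_sum (f := fun i : ℕ => (1 : ℝ) / (i + 1))
          (fun i _ => by positivity) (Finset.mem_range.mpr hK)
  have hH0 : (0 : ℝ) < H := by linarith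
  have hK0 : (0 : ℝ) < (K : ℝ) := by exact_mod_cast hK
  set c : ℕ → ℝ := fun n => (α / H) * ((n : ℝ) / K) with hc
  have hcmono : Monotone c := by
    intro a b hab
    have : ((a : ℝ)) ≤ b := by exact_mod_cast hab
    simp only [hc]
    gcongr
  have hc0 : c 0 = 0 := by simp [hc]
  have hc_nonneg : ∀ n, 0 ≤ c n := by
    intro n; simp only [hc]; positivity
  have hc_le : ∀ n, n ≤ K → c n ≤ α := by
    intro n hn
    have h1 : (n : ℝ) / K ≤ 1 := by
      rw [div_le_one hK0]; exact_mod_cast hn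
    have h2 : α / H ≤ α := by
      rw [div_le_iff₀ hH0]; nlinarith
    calc c n ≤ (α / H) * 1 := by
          apply mul_le_mul_of_nonneg_left h1 (by positivity)
      _ = α / H := mul_one _
      _ ≤ α := h2
  have hc_mem : ∀ n, n ≤ K → c n ∈ Set.Icc (0 : ℝ) 1 :=
    fun n hn => ⟨hc_nonneg n, le_trans (hc_le n hn) hα1.le⟩
  set A : Fin K → ℕ → Set Ω := fun i k => {ω | c k < Q i ω ∧ Q i ω ≤ c (k + 1)} with hA
  have hAmeas : ∀ i k, MeasurableSet (A i k) := by
    intro i k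
    have : A i k = {ω | c k < Q i ω} ∩ {ω | Q i ω ≤ c (k + 1)} := rfl
    rw [this]
    exact (measurableSet_lt measurable_const (hmeas i)).inter
      (measurableSet_le (hmeas i) measurable_const)
  set f : Ω → ℝ≥0∞ := fun ω =>
    ∑ i : Fin K, ∑ k ∈ Finset.range K,
      (((k : ℝ≥0∞)) + 1)⁻¹ * (A i k).indicator 1 ω with hf
  have hfmeas : Measurable f := by
    apply Finset.measurable_sum
    intro i _
    apply Finset.measurable_sum
    intro k _
    exact (measurable_one.indicator (hAmeas i k)).const_mul _
  -- pointwise lower bound on the rejection event (off a null set)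
  have hpoint : ∀ ω, (∀ i, 0 < Q i ω) →
      (∃ j : Fin K, orderStat (fun i => Q i ω) j ≤ (α / H) * (((j : ℕ) + 1) / K)) →
      (1 : ℝ≥0∞) ≤ f ω := by
    intro ω hpos hexj
    obtain ⟨j, hj⟩ := hexj
    have hcj : c ((j : ℕ) + 1) = (α / H) * (((j : ℕ) + 1) / K) := by
      simp only [hc]; push_cast; ring
    have hoc : orderStat (fun i => Q i ω) j ≤ c ((j : ℕ) + 1) := by
      rw [hcj]; exact hj
    have hT := orderStat_count (fun i => Q i ω) j hoc
    set T := Finset.univ.filter (fun i => Q i ω ≤ c ((j : ℕ) + 1)) with hTdef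
    have hik : ∀ i ∈ T, ∃ k, k ≤ (j : ℕ) ∧ ω ∈ A i k := by
      intro i hi
      have hi' : Q i ω ≤ c ((j : ℕ) + 1) := by
        simpa [hTdef] using hi
      have hex : ∃ k, Q i ω ≤ c (k + 1) := ⟨(j : ℕ), hi'⟩
      refine ⟨Nat.find hex, Nat.find_le hi', ?_, Nat.find_spec hex⟩
      -- lower bound : c (Nat.find hex) < Q i ω
      rcases Nat.eq_zero_or_pos (Nat.find hex) with h0 | h0
      · rw [h0, hc0]; exact hpos i
      · by_contra hcon
        push_neg at hcon
        have hlt : Nat.find hex - 1 < Nat.find hex := by omega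
        exact Nat.find_min hex hlt (by
          have : Nat.find hex - 1 + 1 = Nat.find hex := by omega
          rw [this]; exact hcon)
    have hinner : ∀ i ∈ T,
        (((j : ℕ) : ℝ≥0∞) + 1)⁻¹
          ≤ ∑ k ∈ Finset.range K, (((k : ℝ≥0∞)) + 1)⁻¹ * (A i k).indicator 1 ω := by
      intro i hi
      obtain ⟨k, hkj, hmem⟩ := hik i hi
      have hkK : k ∈ Finset.range K := Finset.mem_range.mpr (lt_of_le_of_lt hkj j.isLt)
      calc (((j : ℕ) : ℝ≥0∞) + 1)⁻¹ ≤ ((k : ℝ≥0∞) + 1)⁻¹ := by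
            have hkj' : ((k : ℝ≥0∞)) ≤ (((j : ℕ) : ℝ≥0∞)) := by exact_mod_cast hkj
            gcongr
        _ = ((k : ℝ≥0∞) + 1)⁻¹ * (A i k).indicator 1 ω := by
            rw [Set.indicator_of_mem hmem, Pi.one_apply, mul_one]
        _ ≤ _ := Finset.single_le_sum
            (f := fun k : ℕ => ((k : ℝ≥0∞) + 1)⁻¹ * (A i k).indicator 1 ω)
            (fun _ _ => zero_le) hkK
    have hcancel : (((j : ℕ) + 1 : ℕ) : ℝ≥0∞) • (((j : ℕ) : ℝ≥0∞) + 1)⁻¹ = 1 := by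
      rw [smul_eq_mul]
      push_cast
      have hne : ((j : ℕ) : ℝ≥0∞) + 1 ≠ 0 := by
        simp
      exact ENNReal.mul_inv_cancel hne (by simp)
    calc (1 : ℝ≥0∞) = (((j : ℕ) + 1 : ℕ) : ℝ≥0∞) * (((j : ℕ) : ℝ≥0∞) + 1)⁻¹ := by
          rw [← smul_eq_mul, hcancel]
      _ ≤ (T.card : ℝ≥0∞) * (((j : ℕ) : ℝ≥0∞) + 1)⁻¹ :=
          mul_le_mul_left (by exact_mod_cast hT) _
      _ = ∑ _i ∈ T, (((j : ℕ) : ℝ≥0∞) + 1)⁻¹ := by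
          rw [Finset.sum_const, nsmul_eq_mul]
      _ ≤ ∑ i ∈ T, ∑ k ∈ Finset.range K, (((k : ℝ≥0∞)) + 1)⁻¹ * (A i k).indicator 1 ω :=
          Finset.sum_le_sum hinner
      _ ≤ ∑ i : Fin K, ∑ k ∈ Finset.range K, (((k : ℝ≥0∞)) + 1)⁻¹ * (A i k).indicator 1 ω := by
          apply Finset.sum_le_sum_of_subset (Finset.filter_subset _ _)
      _ = f ω := rfl
  have hsub : {ω | ∃ j : Fin K, orderStat (fun i => Q i ω) j ≤ (α / H) * (((j : ℕ) + 1) / K)}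
      ⊆ {ω | (1 : ℝ≥0∞) ≤ f ω} ∪ ⋃ i, {ω | Q i ω ≤ 0} := by
    intro ω hω
    by_cases hp : ∀ i, 0 < Q i ω
    · exact Or.inl (hpoint ω hp hω)
    · push_neg at hp
      obtain ⟨i, hi⟩ := hp
      exact Or.inr (Set.mem_iUnion.mpr ⟨i, hi⟩)
  have hnull : μ (⋃ i, {ω | Q i ω ≤ 0}) = 0 := by
    apply measure_iUnion_null
    intro i
    have := hvalid i 0 ⟨le_refl 0, zero_le_one⟩
    simpa using this
  have hmarkov : μ {ω | (1 : ℝ≥0∞) ≤ f ω} ≤ ∫⁻ ω, f ω ∂μ := by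
    have := MeasureTheory.mul_meas_ge_le_lintegral₀ (μ := μ)
      (hfmeas.aemeasurable (μ := μ)) 1
    simpa using this
  have hlint : ∫⁻ ω, f ω ∂μ
      = ∑ i : Fin K, ∑ k ∈ Finset.range K, (((k : ℝ≥0∞)) + 1)⁻¹ * μ (A i k) := by
    simp only [hf]
    rw [MeasureTheory.lintegral_finset_sum _ (fun i _ => by
      apply Finset.measurable_sum
      intro k _
      exact (measurable_one.indicator (hAmeas i k)).const_mul _)]
    refine Finset.sum_congr rfl fun i _ => ?_
    rw [MeasureTheory.lintegral_finset_sum _ (fun k _ =>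
      (measurable_one.indicator (hAmeas i k)).const_mul _)]
    refine Finset.sum_congr rfl fun k _ => ?_
    rw [MeasureTheory.lintegral_const_mul _ (measurable_one.indicator (hAmeas i k)),
      MeasureTheory.lintegral_indicator_one (hAmeas i k)]
  have hSbound : ∀ (i : Fin K) (m : ℕ), m < K →
      ∑ k ∈ Finset.range (m + 1), μ (A i k) ≤ ENNReal.ofReal (c (m + 1)) := by
    intro i m hm
    have key : ∀ a b : ℕ, a < b → Disjoint (A i a) (A i b) := by
      intro a b hab
      apply Set.disjoint_left.mpr
      intro ω ha hb
      exact absurd (le_trans ha.2 (hcmono (by omega : a + 1 ≤ b))) (not_le.mpr hb.1)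
    have hdisj : (↑(Finset.range (m + 1)) : Set ℕ).PairwiseDisjoint (A i) := by
      intro a _ b _ hab
      rcases hab.lt_or_gt with h | h
      · exact key _ _ h
      · exact (key _ _ h).symm
    rw [← MeasureTheory.measure_biUnion_finset hdisj (fun k _ => hAmeas i k)]
    have hsub2 : (⋃ k ∈ Finset.range (m + 1), A i k) ⊆ {ω | Q i ω ≤ c (m + 1)} := by
      intro ω hω
      simp only [Set.mem_iUnion] at hω
      obtain ⟨k, hk, hωk⟩ := hω
      have hk' : k + 1 ≤ m + 1 := by
        have := Finset.mem_range.mp hk; omega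
      exact le_trans hωk.2 (hcmono hk')
    calc μ _ ≤ μ {ω | Q i ω ≤ c (m + 1)} := measure_mono hsub2
      _ ≤ ENNReal.ofReal (c (m + 1)) := hvalid i _ (hc_mem _ (by omega))
  have hcoeff : ∀ k ∈ Finset.range K,
      ((k : ℝ≥0∞) + 1)⁻¹ = ∑ m ∈ Finset.Ico k K, ENNReal.ofReal (eAux K m) := by
    intro k hk
    rw [← ENNReal.ofReal_sum_of_nonneg (fun m _ => eAux_nonneg K m),
      eAux_sum_Ico (Finset.mem_range.mp hk)]
    rw [one_div, ENNReal.ofReal_inv_of_pos (by positivity)]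
    congr 1
    rw [show ((k : ℝ) + 1) = (((k + 1 : ℕ)) : ℝ) by push_cast; ring,
      ENNReal.ofReal_natCast]
    push_cast
    ring
  have hinner_bound : ∀ i : Fin K,
      ∑ k ∈ Finset.range K, (((k : ℝ≥0∞)) + 1)⁻¹ * μ (A i k)
        ≤ ENNReal.ofReal (α / K) := by
    intro i
    calc ∑ k ∈ Finset.range K, (((k : ℝ≥0∞)) + 1)⁻¹ * μ (A i k)
        = ∑ k ∈ Finset.range K, ∑ m ∈ Finset.Ico k K,
            ENNReal.ofReal (eAux K m) * μ (A i k) := by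
          refine Finset.sum_congr rfl fun k hk => ?_
          rw [hcoeff k hk, Finset.sum_mul]
      _ = ∑ m ∈ Finset.range K, ∑ k ∈ Finset.range (m + 1),
            ENNReal.ofReal (eAux K m) * μ (A i k) := by
          simp only [Finset.range_eq_Ico]
          exact Finset.sum_Ico_Ico_comm 0 K
            (fun k m => ENNReal.ofReal (eAux K m) * μ (A i k))
      _ = ∑ m ∈ Finset.range K,
            ENNReal.ofReal (eAux K m) * ∑ k ∈ Finset.range (m + 1), μ (A i k) := by
          refine Finset.sum_congr rfl fun m _ => ?_
          rw [Finset.mul_sum]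
      _ ≤ ∑ m ∈ Finset.range K, ENNReal.ofReal (eAux K m) * ENNReal.ofReal (c (m + 1)) := by
          refine Finset.sum_le_sum fun m hm => ?_
          exact mul_le_mul_right (hSbound i m (Finset.mem_range.mp hm)) _
      _ = ENNReal.ofReal (∑ m ∈ Finset.range K, eAux K m * c (m + 1)) := by
          rw [ENNReal.ofReal_sum_of_nonneg
            (fun m _ => mul_nonneg (eAux_nonneg K m) (hc_nonneg _))]
          refine Finset.sum_congr rfl fun m _ => ?_
          rw [ENNReal.ofReal_mul (eAux_nonneg K m)]
      _ = ENNReal.ofReal (α / K) := by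
          congr 1
          have hterm : ∀ m : ℕ, eAux K m * c (m + 1)
              = (α / (H * K)) * (eAux K m * ((m : ℝ) + 1)) := by
            intro m
            simp only [hc]
            push_cast
            ring
          rw [Finset.sum_congr rfl fun m _ => hterm m, ← Finset.mul_sum,
            eAux_weighted_sum K hK, ← hH]
          field_simp
  calc μ {ω | ∃ j : Fin K, orderStat (fun i => Q i ω) j ≤ (α / H) * (((j : ℕ) + 1) / K)}
      ≤ μ ({ω | (1 : ℝ≥0∞) ≤ f ω} ∪ ⋃ i, {ω | Q i ω ≤ 0}) := measure_mono hsub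
    _ ≤ μ {ω | (1 : ℝ≥0∞) ≤ f ω} + μ (⋃ i, {ω | Q i ω ≤ 0}) := measure_union_le _ _
    _ = μ {ω | (1 : ℝ≥0∞) ≤ f ω} := by rw [hnull, add_zero]
    _ ≤ ∫⁻ ω, f ω ∂μ := hmarkov
    _ = ∑ i : Fin K, ∑ k ∈ Finset.range K, (((k : ℝ≥0∞)) + 1)⁻¹ * μ (A i k) := hlint
    _ ≤ ∑ _i : Fin K, ENNReal.ofReal (α / K) :=
        Finset.sum_le_sum fun i _ => hinner_bound i
    _ = (K : ℝ≥0∞) * ENNReal.ofReal (α / K) := by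
        rw [Finset.sum_const, Finset.card_univ, Fintype.card_fin, nsmul_eq_mul]
    _ = ENNReal.ofReal α := by
        rw [← ENNReal.ofReal_natCast K, ← ENNReal.ofReal_mul (by positivity)]
        congr 1
        field_simp
end

section
/- Let Q^1,...,Q^K each satisfy P(Q^j ≤ t) ≤ (1+ε)t for all t ∈ [0,1] (approximately super-uniform). Then the probability that some order statistic Q^{(j)} is at most (α/((1+ε)H_K)) · (j/K) is at most α. -/
open MeasureTheory Finset

theorem BH_sorted_get_le_iff {L : List ℝ} (hL : L.Pairwise (· ≤ ·)) (t : ℝ) (j : ℕ)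
    (hj : j < L.length) :
    L.get ⟨j, hj⟩ ≤ t ↔ j + 1 ≤ L.countP (fun x => decide (x ≤ t)) := by
  have hget : ∀ (a b : Fin L.length), a ≤ b → L.get a ≤ L.get b := by
    intro a b hab
    rcases eq_or_lt_of_le hab with h | h
    · subst h; exact le_refl _
    · exact List.pairwise_iff_get.1 hL a b h
  constructor
  · intro h
    have h1 : L.countP (fun x => decide (x ≤ t)) =
        (L.take (j+1)).countP (fun x => decide (x ≤ t)) +
        (L.drop (j+1)).countP (fun x => decide (x ≤ t)) := by
      rw [← List.countP_append, List.take_append_drop]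
    rw [h1]
    have h2 : (L.take (j+1)).countP (fun x => decide (x ≤ t)) = j + 1 := by
      rw [List.countP_eq_length.2, List.length_take]
      · omega
      · intro x hx
        simp only [decide_eq_true_eq]
        obtain ⟨i, hlt, hx⟩ := List.mem_iff_getElem.1 hx
        rw [← hx, List.getElem_take]
        have hlt' : i < L.length := by simp [List.length_take] at hlt; omega
        have hij : i ≤ j := by simp [List.length_take] at hlt; omega
        calc L[i] = L.get ⟨i, hlt'⟩ := rfl
          _ ≤ L.get ⟨j, hj⟩ := hget _ _ hij
          _ ≤ t := h
    omega
  · intro h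
    by_contra hc
    push_neg at hc
    have h0 : (L.drop j).countP (fun x => decide (x ≤ t)) = 0 := by
      rw [List.countP_eq_zero]
      intro x hx
      simp only [decide_eq_true_eq, not_le]
      obtain ⟨m, hm, hx⟩ := List.mem_iff_getElem.1 hx
      rw [← hx, List.getElem_drop]
      have hlt' : j + m < L.length := by simp [List.length_drop] at hm; omega
      calc t < L.get ⟨j, hj⟩ := hc
        _ ≤ L.get ⟨j + m, hlt'⟩ := hget _ _ (by simp)
        _ = L[j + m] := rfl
    have h1 : L.countP (fun x => decide (x ≤ t)) =
        (L.take j).countP (fun x => decide (x ≤ t)) +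
        (L.drop j).countP (fun x => decide (x ≤ t)) := by
      rw [← List.countP_append, List.take_append_drop]
    have h2 : (L.take j).countP (fun x => decide (x ≤ t)) ≤ j := by
      calc _ ≤ (L.take j).length := List.countP_le_length
        _ ≤ j := by rw [List.length_take]; omega
    omega

theorem BH_orderStat_le_iff {K : ℕ} (q : Fin K → ℝ) (j : Fin K) (t : ℝ) :
    orderStat q j ≤ t ↔ (j : ℕ) + 1 ≤ (univ.filter (fun i => q i ≤ t)).card := by
  unfold orderStat
  rw [BH_sorted_get_le_iff (Multiset.pairwise_sort _ _)]
  have : ((Multiset.map q Finset.univ.val).sort (· ≤ ·)).countP (fun x => decide (x ≤ t))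
      = Multiset.countP (fun x => x ≤ t) (Multiset.map q Finset.univ.val) := by
    conv_rhs => rw [← Multiset.sort_eq (Multiset.map q Finset.univ.val) (· ≤ ·)]
    rw [Multiset.coe_countP]
  rw [this, Multiset.countP_map]
  rfl

theorem BH_measurableSet_card_le {Ω : Type*} [MeasurableSpace Ω] {K : ℕ} (Q : Fin K → Ω → ℝ)
    (hmeas : ∀ i, Measurable (Q i)) (t : ℝ) (n : ℕ) :
    MeasurableSet {ω | n ≤ (univ.filter (fun i => Q i ω ≤ t)).card} := by
  have : {ω | n ≤ (univ.filter (fun i => Q i ω ≤ t)).card}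
      = ⋃ (S : Finset (Fin K)) (_ : S.card = n), ⋂ i ∈ S, {ω | Q i ω ≤ t} := by
    ext ω
    simp only [Set.mem_setOf_eq, Set.mem_iUnion, Set.mem_iInter]
    constructor
    · intro h
      obtain ⟨S, hS, hcard⟩ := Finset.exists_subset_card_eq h
      exact ⟨S, hcard, fun i hi => (Finset.mem_filter.1 (hS hi)).2⟩
    · rintro ⟨S, hcard, h⟩
      calc n = S.card := hcard.symm
        _ ≤ (univ.filter (fun i => Q i ω ≤ t)).card :=
          Finset.card_le_card (fun i hi => Finset.mem_filter.2 ⟨Finset.mem_univ _, h i hi⟩)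
  rw [this]
  exact MeasurableSet.iUnion fun S => MeasurableSet.iUnion fun _ =>
    MeasurableSet.biInter (Set.to_countable _)
      (fun i _ => (hmeas i) measurableSet_Iic)

theorem BH_card_mul_measure_le {Ω : Type*} [MeasurableSpace Ω] (μ : Measure Ω) {K : ℕ}
    (B : Fin K → Set Ω) (hB : ∀ i, MeasurableSet (B i)) {s : Set Ω} (hs : MeasurableSet s)
    (n : ℕ)
    (h : ∀ ω ∈ s, (n : ENNReal) ≤ ∑ i : Fin K, (B i).indicator (1 : Ω → ENNReal) ω) :
    (n : ENNReal) * μ s ≤ ∑ i : Fin K, μ (s ∩ B i) := by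
  calc (n : ENNReal) * μ s = ∫⁻ _ in s, (n : ENNReal) ∂μ := (setLIntegral_const s n).symm
    _ ≤ ∫⁻ ω in s, (∑ i : Fin K, (B i).indicator (1 : Ω → ENNReal) ω) ∂μ :=
        setLIntegral_mono (Finset.measurable_sum _
          (fun i _ => (measurable_one.indicator (hB i)))) h
    _ = ∑ i : Fin K, ∫⁻ ω in s, (B i).indicator (1 : Ω → ENNReal) ω ∂μ :=
        lintegral_finset_sum _ (fun i _ => measurable_one.indicator (hB i))
    _ = ∑ i : Fin K, μ (s ∩ B i) := by
        refine Finset.sum_congr rfl (fun i _ => ?_)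
        rw [lintegral_indicator_one (hB i), Measure.restrict_apply (hB i), Set.inter_comm]

/-- Abel-summation bound. -/
theorem BH_abel (C : ℝ) (hC : 0 ≤ C) (a : ℕ → ℝ) (h0 : a 0 = 0) :
    ∀ K : ℕ, (∀ j ≤ K, a j ≤ C * j) →
    ∑ j ∈ Finset.range K, (1 / (j + 1 : ℝ)) * (a (j + 1) - a j) ≤
      C * ∑ j ∈ Finset.range K, (1 / (j + 1 : ℝ)) - (C * K - a K) / K := by
  intro K
  induction K with
  | zero => intro _; simp [h0]
  | succ K ih =>
    intro hb
    have hbK : ∀ j ≤ K, a j ≤ C * j := fun j hj => hb j (by omega)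
    have ihK := ih hbK
    rw [Finset.sum_range_succ, Finset.sum_range_succ]
    rcases Nat.eq_zero_or_pos K with hK0 | hKpos
    · subst hK0
      simp [h0]
    · have hKR : (0 : ℝ) < K := by exact_mod_cast hKpos
      have haK : a K ≤ C * K := hbK K le_rfl
      have hstep : (1 / (K + 1 : ℝ)) * (a (K + 1) - a K)
          ≤ C * (1 / (K + 1 : ℝ)) - (C * (K + 1) - a (K + 1)) / (K + 1) + (C * K - a K) / K := by
        have h1 : (0 : ℝ) < (K : ℝ) + 1 := by linarith
        rw [← sub_nonneg]
        have heq : C * (1 / ((K : ℝ) + 1)) - (C * ((K : ℝ) + 1) - a (K + 1)) / ((K : ℝ) + 1)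
            + (C * (K : ℝ) - a K) / (K : ℝ) - 1 / ((K : ℝ) + 1) * (a (K + 1) - a K)
            = (C * (K : ℝ) - a K) / ((K : ℝ) * ((K : ℝ) + 1)) := by
          field_simp
          ring
        rw [heq]
        have h2 : (0 : ℝ) ≤ C * (K : ℝ) - a K := by linarith
        positivity
      push_cast
      push_cast at ihK hstep
      linarith

/-- If each `Q j` is approximately super-uniform, `P(Q j ≤ t) ≤ (1+ε)t`, then the BH-style
test rejecting when some order statistic `Q⁽ʲ⁾ ≤ (α / ((1+ε) H_K)) · (j / K)`
(`H_K` the `K`-th harmonic number) has false alarm probability at most `α`. -/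
theorem BH_global_null_false_alarm_approx
    {Ω : Type*} [MeasurableSpace Ω] (μ : Measure Ω) [IsProbabilityMeasure μ]
    (K : ℕ) (hK : 0 < K) (Q : Fin K → Ω → ℝ)
    (hmeas : ∀ j, Measurable (Q j))
    (h01 : ∀ j ω, Q j ω ∈ Set.Icc (0 : ℝ) 1)
    (ε : ℝ) (hε : 0 < ε)
    (hvalid : ∀ j, ∀ t ∈ Set.Icc (0 : ℝ) 1, μ {ω | Q j ω ≤ t} ≤ ENNReal.ofReal ((1 + ε) * t))
    (α : ℝ) (hα : α ∈ Set.Ioo (0 : ℝ) 1)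
    (H : ℝ) (hH : H = ∑ i ∈ Finset.range K, (1 : ℝ) / (i + 1)) :
    μ {ω | ∃ j : Fin K, orderStat (fun i => Q i ω) j ≤ (α / ((1 + ε) * H)) * (((j : ℕ) + 1) / K)}
      ≤ ENNReal.ofReal α := by
  obtain ⟨hα0, hα1⟩ := hα
  have hKR : (0 : ℝ) < K := by exact_mod_cast hK
  have hε1 : (0 : ℝ) < 1 + ε := by linarith
  have hH1 : (1 : ℝ) ≤ H := by
    rw [hH]
    calc (1 : ℝ) = 1 / ((0 : ℕ) + 1) := by norm_num
      _ ≤ _ := Finset.single_le_sum (f := fun i : ℕ => 1 / ((i : ℝ) + 1))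
          (fun i _ => by positivity) (Finset.mem_range.2 hK)
  have hHpos : (0 : ℝ) < H := by linarith
  set α' : ℝ := α / ((1 + ε) * H) with hα'
  have hα'pos : 0 < α' := by positivity
  have h1εH : 1 ≤ (1 + ε) * H := by nlinarith
  have hα'le : α' ≤ α := by
    rw [hα', div_le_iff₀ (by positivity)]
    nlinarith [mul_le_mul_of_nonneg_left h1εH hα0.le]
  set d : ℕ → ℝ := fun k => α' * (k / K) with hd
  have hd0 : d 0 = 0 := by simp [hd]
  have hdapp : ∀ k : ℕ, d k = α' * (k / K) := fun k => rfl
  have hdmono : Monotone d := by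
    intro x y hxy
    rw [hdapp, hdapp]
    gcongr

  have hdIcc : ∀ k ≤ K, d k ∈ Set.Icc (0 : ℝ) 1 := by
    intro k hk
    constructor
    · positivity
    · have h1 : (k : ℝ) / K ≤ 1 := by
        rw [div_le_one hKR]; exact_mod_cast hk
      calc α' * ((k : ℝ) / K) ≤ α' * 1 := by nlinarith
        _ ≤ 1 := by linarith
  -- basic sets
  set A : ℕ → Set Ω := fun k => {ω | k ≤ (univ.filter (fun i => Q i ω ≤ d k)).card} with hA
  have hAmeas : ∀ k, MeasurableSet (A k) := fun k => BH_measurableSet_card_le Q hmeas (d k) k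
  set D : ℕ → Set Ω := fun k => A k \ ⋃ (l : ℕ) (_ : l ≤ K) (_ : k < l), A l with hD
  have hDmeas : ∀ k, MeasurableSet (D k) := fun k =>
    (hAmeas k).diff (MeasurableSet.iUnion fun l => MeasurableSet.iUnion fun _ =>
      MeasurableSet.iUnion fun _ => hAmeas l)
  have hDsub : ∀ k, D k ⊆ A k := fun k => Set.diff_subset
  have hDdisj : ∀ k l : ℕ, l ≤ K → k < l → Disjoint (D k) (D l) := by
    intro k l hlK hkl
    rw [Set.disjoint_left]
    intro ω hωk hωl
    exact hωk.2 (Set.mem_iUnion.2 ⟨l, Set.mem_iUnion.2 ⟨hlK, Set.mem_iUnion.2 ⟨hkl, (hDsub l) hωl⟩⟩⟩)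
  set Bslab : Fin K → ℕ → Set Ω := fun i j => {ω | d j < Q i ω ∧ Q i ω ≤ d (j + 1)} with hB
  have hBmeas : ∀ i j, MeasurableSet (Bslab i j) := by
    intro i j
    have : Bslab i j = Q i ⁻¹' Set.Ioc (d j) (d (j + 1)) := rfl
    rw [this]
    exact (hmeas i) measurableSet_Ioc
  have hzero : ∀ i : Fin K, μ {ω | Q i ω ≤ (0 : ℝ)} = 0 := by
    intro i
    refine le_antisymm ?_ zero_le
    have := hvalid i 0 ⟨le_rfl, zero_le_one⟩
    simpa using this
  -- card to indicator
  have hcard : ∀ (t : ℝ) (ω : Ω), (((univ.filter (fun i => Q i ω ≤ t)).card : ℕ) : ENNReal)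
      = ∑ i : Fin K, ({ω' | Q i ω' ≤ t}).indicator (1 : Ω → ENNReal) ω := by
    intro t ω
    rw [Finset.card_filter]
    push_cast
    refine Finset.sum_congr rfl fun i _ => ?_
    by_cases hi : Q i ω ≤ t <;> simp [hi, Set.indicator_apply]
  -- step: E inside union of D's
  have hE : {ω | ∃ j : Fin K, orderStat (fun i => Q i ω) j
        ≤ (α / ((1 + ε) * H)) * (((j : ℕ) + 1) / K)}
      ⊆ ⋃ k ∈ Finset.Icc 1 K, D k := by
    intro ω hω
    obtain ⟨j, hj⟩ := hω
    have hjA : ω ∈ A ((j : ℕ) + 1) := by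
      rw [hA]
      simp only [Set.mem_setOf_eq]
      rw [← BH_orderStat_le_iff]
      convert hj using 2
      push_cast
      ring
    have hTne : (((Finset.Icc 1 K).filter (fun k => ω ∈ A k))).Nonempty := by
      refine ⟨(j : ℕ) + 1, Finset.mem_filter.2 ⟨Finset.mem_Icc.2 ⟨by omega, ?_⟩, hjA⟩⟩
      have := j.isLt; omega
    set m := (((Finset.Icc 1 K).filter (fun k => ω ∈ A k))).max' hTne with hm
    have hmmem := Finset.max'_mem _ hTne
    rw [Finset.mem_filter, Finset.mem_Icc] at hmmem
    refine Set.mem_biUnion (Finset.mem_Icc.2 ⟨hmmem.1.1, hmmem.1.2⟩) ?_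
    refine ⟨hmmem.2, ?_⟩
    intro hcon
    simp only [Set.mem_iUnion] at hcon
    obtain ⟨l, hlK, hml, hωl⟩ := hcon
    have : l ≤ m := Finset.le_max' _ l (Finset.mem_filter.2 ⟨Finset.mem_Icc.2 ⟨by omega, hlK⟩, hωl⟩)
    omega
  -- per-k bound
  have hstepk : ∀ k ∈ Finset.Icc 1 K, μ (D k)
      ≤ (k : ENNReal)⁻¹ * ∑ i : Fin K, ∑ j ∈ Finset.range k, μ (D k ∩ Bslab i j) := by
    intro k hk
    rw [Finset.mem_Icc] at hk
    have hk0 : (k : ENNReal) ≠ 0 := Nat.cast_ne_zero.2 (by omega)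
    have hktop : (k : ENNReal) ≠ ⊤ := ENNReal.natCast_ne_top k
    have h2 : (k : ENNReal) * μ (D k) ≤ ∑ i : Fin K, μ (D k ∩ {ω | Q i ω ≤ d k}) := by
      refine BH_card_mul_measure_le μ _ (fun i => (hmeas i) measurableSet_Iic) (hDmeas k) k ?_
      intro ω hω
      have h1 : (k : ENNReal) ≤ (((univ.filter (fun i => Q i ω ≤ d k)).card : ℕ) : ENNReal) := by
        exact_mod_cast ((hDsub k) hω)
      exact h1.trans (le_of_eq (hcard (d k) ω))
    have h3 : ∀ i : Fin K, μ (D k ∩ {ω | Q i ω ≤ d k})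
        ≤ ∑ j ∈ Finset.range k, μ (D k ∩ Bslab i j) := by
      intro i
      have hcover : D k ∩ {ω | Q i ω ≤ d k}
          ⊆ (⋃ j ∈ Finset.range k, (D k ∩ Bslab i j)) ∪ {ω | Q i ω ≤ (0 : ℝ)} := by
        intro ω hω
        obtain ⟨hωD, hωB⟩ := hω
        by_cases hpos : Q i ω ≤ 0
        · exact Or.inr hpos
        · push_neg at hpos
          left
          have hex : ∀ n : ℕ, Q i ω ≤ d n → ∃ j < n, d j < Q i ω ∧ Q i ω ≤ d (j + 1) := by
            intro n
            induction n with
            | zero => intro h; rw [hd0] at h; linarith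
            | succ n ihn =>
              intro h
              by_cases hn : Q i ω ≤ d n
              · obtain ⟨j, hj1, hj2⟩ := ihn hn
                exact ⟨j, by omega, hj2⟩
              · exact ⟨n, by omega, not_le.1 hn, h⟩
          obtain ⟨j, hj1, hj2⟩ := hex k hωB
          exact Set.mem_biUnion (Finset.mem_range.2 hj1) ⟨hωD, hj2⟩
      calc μ (D k ∩ {ω | Q i ω ≤ d k})
          ≤ μ ((⋃ j ∈ Finset.range k, (D k ∩ Bslab i j)) ∪ {ω | Q i ω ≤ (0 : ℝ)}) :=
            measure_mono hcover
        _ ≤ μ (⋃ j ∈ Finset.range k, (D k ∩ Bslab i j)) + μ {ω | Q i ω ≤ (0 : ℝ)} :=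
            measure_union_le _ _
        _ = μ (⋃ j ∈ Finset.range k, (D k ∩ Bslab i j)) := by rw [hzero i, add_zero]
        _ ≤ ∑ j ∈ Finset.range k, μ (D k ∩ Bslab i j) := measure_biUnion_finset_le _ _
    calc μ (D k) = (k : ENNReal)⁻¹ * ((k : ENNReal) * μ (D k)) := by
          rw [← mul_assoc, ENNReal.inv_mul_cancel hk0 hktop, one_mul]
      _ ≤ (k : ENNReal)⁻¹ * ∑ i : Fin K, μ (D k ∩ {ω | Q i ω ≤ d k}) :=
          mul_le_mul_right h2 _
      _ ≤ _ := mul_le_mul_right (Finset.sum_le_sum fun i _ => h3 i) _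
  -- per-i final bound
  have hfinal : ∀ i : Fin K, ∑ j ∈ Finset.range K, (((j + 1 : ℕ)) : ENNReal)⁻¹ * μ (Bslab i j)
      ≤ ENNReal.ofReal (α / K) := by
    intro i
    set a : ℕ → ℝ := fun j => (μ {ω | Q i ω ≤ d j}).toReal with ha
    have haapp : ∀ j, a j = (μ {ω | Q i ω ≤ d j}).toReal := fun j => rfl
    have hfin : ∀ j : ℕ, μ {ω | Q i ω ≤ d j} ≠ ⊤ := fun j => measure_ne_top μ _
    have hsubset : ∀ j : ℕ, {ω | Q i ω ≤ d j} ⊆ {ω | Q i ω ≤ d (j + 1)} :=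
      fun j ω hω => le_trans hω (hdmono (Nat.le_succ j))
    have hamono : ∀ j : ℕ, a j ≤ a (j + 1) :=
      fun j => ENNReal.toReal_mono (hfin _) (measure_mono (hsubset j))
    have hμB : ∀ j : ℕ, μ (Bslab i j) = ENNReal.ofReal (a (j + 1) - a j) := by
      intro j
      have hBeq : Bslab i j = {ω | Q i ω ≤ d (j + 1)} \ {ω | Q i ω ≤ d j} := by
        ext ω
        constructor
        · rintro ⟨h1, h2⟩
          exact ⟨h2, not_le.2 h1⟩
        · rintro ⟨h1, h2⟩
          exact ⟨not_le.1 h2, h1⟩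
      have hne : μ {ω | Q i ω ≤ d (j + 1)} - μ {ω | Q i ω ≤ d j} ≠ ⊤ :=
        ne_top_of_le_ne_top (hfin (j + 1)) tsub_le_self
      rw [hBeq, measure_diff (hsubset j) ((hmeas i measurableSet_Iic).nullMeasurableSet) (hfin j),
        ← ENNReal.ofReal_toReal hne,
        ENNReal.toReal_sub_of_le (measure_mono (hsubset j)) (hfin (j + 1))]
    have hcoef : ∀ j : ℕ, (((j + 1 : ℕ)) : ENNReal)⁻¹ = ENNReal.ofReal (1 / ((j : ℝ) + 1)) := by
      intro j
      rw [one_div, ENNReal.ofReal_inv_of_pos (by positivity)]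
      congr 1
      rw [show ((j : ℝ) + 1) = ((j + 1 : ℕ) : ℝ) by push_cast; ring, ENNReal.ofReal_natCast]
    have hterm : ∀ j : ℕ, (((j + 1 : ℕ)) : ENNReal)⁻¹ * μ (Bslab i j)
        = ENNReal.ofReal ((1 / ((j : ℝ) + 1)) * (a (j + 1) - a j)) := by
      intro j
      rw [hcoef j, hμB j, ← ENNReal.ofReal_mul (by positivity)]
    set C : ℝ := (1 + ε) * α' / K with hC
    have hCpos : 0 ≤ C := by positivity
    have h0 : a 0 = 0 := by
      rw [haapp]
      simp only [hd0]
      rw [hzero i, ENNReal.toReal_zero]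
    have hb : ∀ j ≤ K, a j ≤ C * j := by
      intro j hj
      have hdj0 : 0 ≤ d j := (hdIcc j hj).1
      have h2 : a j ≤ (1 + ε) * d j :=
        ENNReal.toReal_le_of_le_ofReal (by positivity) (hvalid i (d j) (hdIcc j hj))
      calc a j ≤ (1 + ε) * d j := h2
        _ = C * j := by rw [hdapp, hC]; field_simp
    have habel := BH_abel C hCpos a h0 K hb
    have hCK : 0 ≤ (C * K - a K) / K := by
      have := hb K le_rfl
      apply div_nonneg (by linarith) hKR.le
    have hCH : C * (∑ j ∈ Finset.range K, (1 / ((j : ℝ) + 1))) = α / K := by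
      rw [← hH, hC, hα']
      field_simp
    calc ∑ j ∈ Finset.range K, (((j + 1 : ℕ)) : ENNReal)⁻¹ * μ (Bslab i j)
        = ∑ j ∈ Finset.range K, ENNReal.ofReal ((1 / ((j : ℝ) + 1)) * (a (j + 1) - a j)) :=
          Finset.sum_congr rfl fun j _ => hterm j
      _ = ENNReal.ofReal (∑ j ∈ Finset.range K, (1 / ((j : ℝ) + 1)) * (a (j + 1) - a j)) :=
          (ENNReal.ofReal_sum_of_nonneg
            (fun j _ => mul_nonneg (by positivity) (by linarith [hamono j]))).symm
      _ ≤ ENNReal.ofReal (α / K) := ENNReal.ofReal_le_ofReal (by linarith [habel, hCK, hCH])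
  -- grand chain
  refine le_trans (measure_mono hE) ?_
  calc μ (⋃ k ∈ Finset.Icc 1 K, D k)
      ≤ ∑ k ∈ Finset.Icc 1 K, μ (D k) := measure_biUnion_finset_le _ _
    _ ≤ ∑ k ∈ Finset.Icc 1 K,
          (k : ENNReal)⁻¹ * ∑ i : Fin K, ∑ j ∈ Finset.range k, μ (D k ∩ Bslab i j) :=
        Finset.sum_le_sum hstepk
    _ = ∑ k ∈ Finset.Icc 1 K, ∑ i : Fin K, ∑ j ∈ Finset.range k,
          (k : ENNReal)⁻¹ * μ (D k ∩ Bslab i j) := by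
        simp_rw [Finset.mul_sum]
    _ ≤ ∑ k ∈ Finset.Icc 1 K, ∑ i : Fin K, ∑ j ∈ Finset.range k,
          (((j + 1 : ℕ)) : ENNReal)⁻¹ * μ (D k ∩ Bslab i j) := by
        refine Finset.sum_le_sum fun k hk => Finset.sum_le_sum fun i _ =>
          Finset.sum_le_sum fun j hj => ?_
        refine mul_le_mul_left (ENNReal.inv_le_inv' ?_) _
        exact_mod_cast Nat.succ_le_of_lt (Finset.mem_range.1 hj)
    _ = ∑ i : Fin K, ∑ k ∈ Finset.Icc 1 K, ∑ j ∈ Finset.range k,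
          (((j + 1 : ℕ)) : ENNReal)⁻¹ * μ (D k ∩ Bslab i j) := Finset.sum_comm
    _ = ∑ i : Fin K, ∑ j ∈ Finset.range K, ∑ k ∈ Finset.Icc (j + 1) K,
          (((j + 1 : ℕ)) : ENNReal)⁻¹ * μ (D k ∩ Bslab i j) := by
        refine Finset.sum_congr rfl fun i _ => ?_
        refine Finset.sum_comm' ?_
        intro k j
        simp only [Finset.mem_Icc, Finset.mem_range]
        omega
    _ ≤ ∑ i : Fin K, ∑ j ∈ Finset.range K, (((j + 1 : ℕ)) : ENNReal)⁻¹ * μ (Bslab i j) := by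
        refine Finset.sum_le_sum fun i _ => Finset.sum_le_sum fun j hj => ?_
        rw [← Finset.mul_sum]
        refine mul_le_mul_right ?_ _
        have hdisj : (↑(Finset.Icc (j + 1) K) : Set ℕ).PairwiseDisjoint
            (fun k => D k ∩ Bslab i j) := by
          intro x hx y hy hxy
          simp only [Finset.coe_Icc, Set.mem_Icc] at hx hy
          rcases lt_or_gt_of_ne hxy with h | h
          · exact ((hDdisj x y hy.2 h).mono Set.inter_subset_left Set.inter_subset_left)
          · exact ((hDdisj y x hx.2 h).symm.mono Set.inter_subset_left Set.inter_subset_left)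
        calc ∑ k ∈ Finset.Icc (j + 1) K, μ (D k ∩ Bslab i j)
            = μ (⋃ k ∈ Finset.Icc (j + 1) K, (D k ∩ Bslab i j)) :=
              (measure_biUnion_finset hdisj (fun k _ => (hDmeas k).inter (hBmeas i j))).symm
          _ ≤ μ (Bslab i j) := measure_mono (Set.iUnion₂_subset fun k _ => Set.inter_subset_right)
    _ ≤ ∑ _i : Fin K, ENNReal.ofReal (α / K) := Finset.sum_le_sum fun i _ => hfinal i
    _ = ENNReal.ofReal α := by
        rw [Finset.sum_const, Finset.card_univ, Fintype.card_fin, nsmul_eq_mul,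
          ← ENNReal.ofReal_natCast K, ← ENNReal.ofReal_mul (by positivity)]
        congr 1
        field_simp
end

section
/- If S_1,...,S_n, T are exchangeable random variables (not necessarily continuous), the conformal p-value Q = (1 + #{i : S_i ≥ T})/(n+1) satisfies P(Q ≤ t) ≤ t for all t ∈ [0,1]. -/
open MeasureTheory Finset
open scoped ENNReal

/-- Combinatorial key lemma: at most `k` indices can have rank `≤ k`. -/
lemma rank_count_le {n : ℕ} (v : Fin (n + 1) → ℝ) (k : ℕ) :
    (univ.filter fun j : Fin (n + 1) =>
        (univ.filter fun i => v j ≤ v i).card ≤ k).card ≤ k := by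
  set A := univ.filter fun j : Fin (n + 1) =>
      (univ.filter fun i => v j ≤ v i).card ≤ k with hA
  rcases A.eq_empty_or_nonempty with h | h
  · simp [h]
  · obtain ⟨j, hjA, hj⟩ := A.exists_min_image v h
    have hsub : A ⊆ univ.filter fun i => v j ≤ v i := by
      intro x hx
      simp only [mem_filter, mem_univ, true_and]
      exact hj x hx
    have hjk : (univ.filter fun i => v j ≤ v i).card ≤ k := by
      have := hjA
      rw [hA, mem_filter] at this
      exact this.2
    exact le_trans (Finset.card_le_card hsub) hjk

/-- If `S 1, ..., S n, T` are exchangeable real random variables (not necessarily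
with a continuous distribution), the conformal p-value `Q = (1 + #{i : S i ≥ T})/(n+1)`
satisfies `P(Q ≤ t) ≤ t` for all `t ∈ [0,1]`. -/
theorem conformal_p_value_super_uniform_exchangeable
    {Ω : Type*} [MeasurableSpace Ω] (μ : Measure Ω) [IsProbabilityMeasure μ]
    (n : ℕ) (X : Fin (n + 1) → Ω → ℝ)
    (hmeas : ∀ i, Measurable (X i))
    (hexch : ∀ σ : Equiv.Perm (Fin (n + 1)),
      Measure.map (fun ω => fun i => X (σ i) ω) μ = Measure.map (fun ω => fun i => X i ω) μ)
    (S : Fin n → Ω → ℝ) (T : Ω → ℝ)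
    (hS : ∀ i : Fin n, S i = X i.castSucc) (hT : T = X (Fin.last n))
    (Q : Ω → ℝ)
    (hQ : ∀ ω, Q ω = (1 + ((univ.filter fun i : Fin n => T ω ≤ S i ω).card : ℝ)) / (n + 1)) :
    ∀ t ∈ Set.Icc (0 : ℝ) 1, μ {ω | Q ω ≤ t} ≤ ENNReal.ofReal t := by
  intro t ht
  obtain ⟨ht0, ht1⟩ := ht
  set V : Ω → (Fin (n + 1) → ℝ) := fun ω i => X i ω with hV
  have hVmeas : Measurable V := measurable_pi_lambda _ hmeas
  set k : ℕ := ⌊t * (n + 1)⌋₊ with hk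
  set rk : Fin (n + 1) → (Fin (n + 1) → ℝ) → ℕ :=
    fun j v => (univ.filter fun i => v j ≤ v i).card with hrk
  -- measurability of the rank level sets
  have hrkmeasSet : ∀ j : Fin (n + 1),
      MeasurableSet {v : Fin (n + 1) → ℝ | rk j v ≤ k} := by
    intro j
    have hm : Measurable (fun v : Fin (n + 1) → ℝ => ((rk j v : ℕ) : ℝ)) := by
      have heq : (fun v : Fin (n + 1) → ℝ => ((rk j v : ℕ) : ℝ))
          = fun v => ∑ i : Fin (n + 1), if v j ≤ v i then (1 : ℝ) else 0 := by
        funext v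
        rw [hrk]
        simp only [Finset.card_filter]
        push_cast
        rfl
      rw [heq]
      exact Finset.measurable_sum _ fun i _ =>
        Measurable.ite (measurableSet_le (measurable_pi_apply j) (measurable_pi_apply i))
          measurable_const measurable_const
    have : {v : Fin (n + 1) → ℝ | rk j v ≤ k}
        = (fun v : Fin (n + 1) → ℝ => ((rk j v : ℕ) : ℝ)) ⁻¹' Set.Iic (k : ℝ) := by
      ext v
      simp [Nat.cast_le]
    rw [this]
    exact hm measurableSet_Iic
  set A : Fin (n + 1) → Set Ω := fun j => {ω | rk j (V ω) ≤ k} with hAdef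
  have hAmeas : ∀ j, MeasurableSet (A j) := fun j => hVmeas (hrkmeasSet j)
  -- exchangeability: each A j has the same measure as A (last)
  have hB : ∀ j, μ (A j) = μ (A (Fin.last n)) := by
    intro j
    set σ := Equiv.swap j (Fin.last n) with hσ
    have hrank : ∀ v : Fin (n + 1) → ℝ, rk (Fin.last n) (v ∘ σ) = rk j v := by
      intro v
      have h2 : (univ.filter fun i => (v ∘ σ) (Fin.last n) ≤ (v ∘ σ) i)
          = (univ.filter fun i => v j ≤ v i).map σ.symm.toEmbedding := by
        ext i
        simp [Finset.mem_map_equiv, Function.comp_apply, hσ, Equiv.swap_apply_right]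
      simp only [hrk]
      rw [h2, Finset.card_map]
    have hmeasσ : Measurable (fun ω => fun i => X (σ i) ω) :=
      measurable_pi_lambda _ fun i => hmeas (σ i)
    have hAj : A j = (fun ω => fun i => X (σ i) ω) ⁻¹'
        {v : Fin (n + 1) → ℝ | rk (Fin.last n) v ≤ k} := by
      ext ω
      simp only [hAdef, Set.mem_preimage, Set.mem_setOf_eq]
      have : (fun i => X (σ i) ω) = (V ω) ∘ σ := rfl
      rw [this, hrank]
    calc μ (A j)
        = μ ((fun ω => fun i => X (σ i) ω) ⁻¹'
            {v : Fin (n + 1) → ℝ | rk (Fin.last n) v ≤ k}) := by rw [hAj]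
      _ = (Measure.map (fun ω => fun i => X (σ i) ω) μ)
            {v : Fin (n + 1) → ℝ | rk (Fin.last n) v ≤ k} :=
          (Measure.map_apply hmeasσ (hrkmeasSet _)).symm
      _ = (Measure.map (fun ω => fun i => X i ω) μ)
            {v : Fin (n + 1) → ℝ | rk (Fin.last n) v ≤ k} := by rw [hexch σ]
      _ = μ ((fun ω => fun i => X i ω) ⁻¹'
            {v : Fin (n + 1) → ℝ | rk (Fin.last n) v ≤ k}) :=
          Measure.map_apply hVmeas (hrkmeasSet _)
      _ = μ (A (Fin.last n)) := rfl
  -- sum bound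
  have hsum : ∑ j : Fin (n + 1), μ (A j) ≤ (k : ℝ≥0∞) := by
    calc ∑ j : Fin (n + 1), μ (A j)
        = ∑ j : Fin (n + 1), ∫⁻ ω, (A j).indicator (fun _ => (1 : ℝ≥0∞)) ω ∂μ := by
          refine Finset.sum_congr rfl fun j _ => ?_
          exact (lintegral_indicator_one (hAmeas j)).symm
      _ = ∫⁻ ω, ∑ j : Fin (n + 1), (A j).indicator (fun _ => (1 : ℝ≥0∞)) ω ∂μ :=
          (lintegral_finset_sum _ fun j _ =>
            (measurable_const.indicator (hAmeas j))).symm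
      _ ≤ ∫⁻ _, (k : ℝ≥0∞) ∂μ := by
          refine lintegral_mono fun ω => ?_
          have hpt : ∑ j : Fin (n + 1), (A j).indicator (fun _ => (1 : ℝ≥0∞)) ω
              = ((univ.filter fun j : Fin (n + 1) => rk j (V ω) ≤ k).card : ℝ≥0∞) := by
            rw [Finset.card_filter]
            push_cast
            refine Finset.sum_congr rfl fun j _ => ?_
            by_cases h : rk j (V ω) ≤ k
            · simp [Set.indicator_apply, hAdef, h]
            · simp [Set.indicator_apply, hAdef, h]
          rw [hpt]
          exact Nat.cast_le.mpr (rank_count_le (V ω) k)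
      _ = (k : ℝ≥0∞) := by simp
  have hlast : ((n : ℝ≥0∞) + 1) * μ (A (Fin.last n)) ≤ (k : ℝ≥0∞) := by
    have : ∑ j : Fin (n + 1), μ (A j) = ((n : ℝ≥0∞) + 1) * μ (A (Fin.last n)) := by
      rw [Finset.sum_congr rfl fun j _ => hB j]
      simp [Finset.sum_const, mul_comm]
    rw [← this]
    exact hsum
  -- identify the event {Q ≤ t} with A (last)
  have hev : {ω | Q ω ≤ t} = A (Fin.last n) := by
    ext ω
    simp only [Set.mem_setOf_eq, hAdef]
    have hrkval : (rk (Fin.last n) (V ω) : ℝ)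
        = 1 + ((univ.filter fun i : Fin n => T ω ≤ S i ω).card : ℝ) := by
      have : rk (Fin.last n) (V ω)
          = (univ.filter fun i : Fin n => T ω ≤ S i ω).card + 1 := by
        rw [hrk]
        simp only [Finset.card_filter]
        rw [Fin.sum_univ_castSucc]
        have hlastterm : (if V ω (Fin.last n) ≤ V ω (Fin.last n) then 1 else 0) = 1 := by
          simp
        rw [hlastterm]
        congr 1
        refine Finset.sum_congr rfl fun i _ => ?_
        rw [hT, hS i]
      rw [this]
      push_cast
      ring
    rw [hQ ω]
    rw [div_le_iff₀ (by positivity : (0 : ℝ) < (n : ℝ) + 1)]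
    rw [← hrkval]
    constructor
    · intro h
      rw [Nat.le_floor_iff (by positivity)]
      exact h
    · intro h
      have := (Nat.le_floor_iff (by positivity : (0:ℝ) ≤ t * ((n:ℝ)+1))).mp h
      exact this
  rw [hev]
  -- conclude
  have hkle : (k : ℝ≥0∞) ≤ ((n : ℝ≥0∞) + 1) * ENNReal.ofReal t := by
    have h1 : (k : ℝ) ≤ t * ((n : ℝ) + 1) := Nat.floor_le (by positivity)
    calc (k : ℝ≥0∞) = ENNReal.ofReal (k : ℝ) := by simp
      _ ≤ ENNReal.ofReal (t * ((n : ℝ) + 1)) := ENNReal.ofReal_le_ofReal h1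
      _ = ENNReal.ofReal t * ENNReal.ofReal ((n : ℝ) + 1) := ENNReal.ofReal_mul ht0
      _ = ((n : ℝ≥0∞) + 1) * ENNReal.ofReal t := by
          rw [mul_comm]
          congr 1
          rw [show ((n : ℝ) + 1) = ((n + 1 : ℕ) : ℝ) by push_cast; ring]
          rw [ENNReal.ofReal_natCast]
          push_cast
          ring
  have := le_trans hlast hkle
  have h0 : ((n : ℝ≥0∞) + 1) ≠ 0 := by
    simp
  have htop : ((n : ℝ≥0∞) + 1) ≠ ⊤ := by simp
  exact (ENNReal.mul_le_mul_iff_right h0 htop).mp this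
end

section
/- A Beta(a,b) random variable with mean μ = a/(a+b) satisfies, for any ε > 0, P(X ≥ (1+ε)μ) ≤ exp(−2(a+b)ε²μ²) (a Hoeffding-type concentration bound), which implies that for a_n/n → t ∈ (0,1), Beta(a_n, n+1−a_n) concentrates around t. -/
open MeasureTheory Filter
open Real Finset

/-- The `Beta(a,b)` distribution on `ℝ`, with density `x^(a-1) (1-x)^(b-1) / B(a,b)` on `(0,1)`. -/
noncomputable def betaMeasure (a b : ℝ) : Measure ℝ :=
  volume.withDensity fun x =>
    ENNReal.ofReal ((Set.Ioo (0 : ℝ) 1).indicator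
      (fun t => t ^ (a - 1) * (1 - t) ^ (b - 1) /
        ∫ s in Set.Ioo (0 : ℝ) 1, s ^ (a - 1) * (1 - s) ^ (b - 1)) x)

lemma mono_aux {f f' : ℝ → ℝ} (hf : ∀ x, HasDerivAt f (f' x) x)
    (h' : ∀ x, 0 ≤ x → 0 ≤ f' x) {l : ℝ} (hl : 0 ≤ l) : f 0 ≤ f l := by
  have hmono := monotoneOn_of_deriv_nonneg (convex_Ici (0:ℝ))
    (fun x _ => (hf x).continuousAt.continuousWithinAt)
    (fun x _ => (hf x).differentiableAt.differentiableWithinAt)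
    (fun x hx => by
      rw [(hf x).deriv]
      exact h' x (le_of_lt (by simpa [interior_Ici] using hx)))
  exact hmono Set.self_mem_Ici hl hl

lemma hoeff_scalar (p : ℝ) (hp0 : 0 ≤ p) (hp1 : p ≤ 1) (l : ℝ) (hl : 0 ≤ l) :
    p * exp (-l) + (1 - p) ≤ exp (l ^ 2 / 8 - l * p) := by
  set D : ℝ → ℝ := fun x => p * exp (-x) + (1 - p) with hDdef
  have hDpos : ∀ x, 0 < D x := by
    intro x
    have he := exp_pos (-x)
    rcases eq_or_lt_of_le hp1 with h | h
    · simp only [hDdef, ← h]; nlinarith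
    · have h1 : 0 < 1 - p := by linarith
      have h2 : 0 ≤ p * exp (-x) := mul_nonneg hp0 he.le
      simp only [hDdef]; linarith
  have hD' : ∀ x, HasDerivAt D (-(p * exp (-x))) x := by
    intro x
    have : HasDerivAt (fun x : ℝ => exp (-x)) (-exp (-x)) x := by
      simpa [Function.comp_def] using (Real.hasDerivAt_exp (-x)).comp x (hasDerivAt_neg x)
    simpa [hDdef, mul_comm, mul_assoc, mul_left_comm] using ((this.const_mul p).add_const (1 - p))
  set φ' : ℝ → ℝ := fun x => x / 4 - p + p * exp (-x) / D x with hφ'def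
  set φ : ℝ → ℝ := fun x => x ^ 2 / 8 - x * p - Real.log (D x) with hφdef
  have hφ' : ∀ x, HasDerivAt φ (φ' x) x := by
    intro x
    have hlog : HasDerivAt (fun x => Real.log (D x)) (-(p * exp (-x)) / D x) x :=
      (hD' x).log (hDpos x).ne'
    have h1 : HasDerivAt (fun x : ℝ => x ^ 2 / 8 - x * p) (x / 4 - p) x := by
      have := ((hasDerivAt_pow 2 x).div_const 8).sub ((hasDerivAt_id x).mul_const p)
      exact this.congr_deriv (by ring)
    have := h1.sub hlog
    refine this.congr_deriv ?_
    simp only [hφ'def]; ring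
  set φ'' : ℝ → ℝ := fun x => 1 / 4 - p * exp (-x) * (1 - p) / (D x) ^ 2 with hφ''def
  have hφ'' : ∀ x, HasDerivAt φ' (φ'' x) x := by
    intro x
    have hnum : HasDerivAt (fun x : ℝ => p * exp (-x)) (-(p * exp (-x))) x := by
      have : HasDerivAt (fun x : ℝ => exp (-x)) (-exp (-x)) x := by
        simpa [Function.comp_def] using (Real.hasDerivAt_exp (-x)).comp x (hasDerivAt_neg x)
      simpa [mul_comm, mul_assoc, mul_left_comm] using this.const_mul p
    have hdiv := hnum.div (hD' x) (hDpos x).ne'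
    have h1 : HasDerivAt (fun x : ℝ => x / 4 - p) (1 / 4) x := by
      simpa using ((hasDerivAt_id x).div_const 4).sub_const p
    have := h1.add hdiv
    refine this.congr_deriv ?_
    have hD := (hDpos x).ne'
    simp only [hφ''def, hDdef]
    field_simp
    ring
  have hφ''nonneg : ∀ x, 0 ≤ φ'' x := by
    intro x
    have hD := hDpos x
    have he := exp_pos (-x)
    rw [hφ''def]
    rw [sub_nonneg, div_le_iff₀ (by positivity)]
    have : D x = p * exp (-x) + (1 - p) := rfl
    nlinarith [sq_nonneg (p * exp (-x) - (1 - p)), mul_nonneg hp0 he.le, sub_nonneg.2 hp1]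
  have hφ'nonneg : ∀ x, 0 ≤ x → 0 ≤ φ' x := by
    intro x hx
    have h0 : φ' 0 = 0 := by
      simp only [hφ'def, hDdef]
      simp
    have := mono_aux hφ'' (fun x _ => hφ''nonneg x) hx
    linarith [this]
  have hfinal := mono_aux hφ' hφ'nonneg hl
  have h0 : φ 0 = 0 := by
    simp only [hφdef, hDdef]
    simp
  rw [h0] at hfinal
  have : Real.log (D l) ≤ l ^ 2 / 8 - l * p := by
    simp only [hφdef] at hfinal; linarith
  exact ((Real.log_le_iff_le_exp (hDpos l)).1 this)

lemma two_point_pos (p : ℝ) (hp0 : 0 ≤ p) (hp1 : p ≤ 1) (l : ℝ) :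
    0 ≤ p * exp (-l) + (1 - p) := by
  have he := exp_pos (-l)
  rcases eq_or_lt_of_le hp1 with h | h
  · rw [← h]; nlinarith
  · nlinarith [mul_nonneg hp0 he.le]

lemma binom_tail (N k : ℕ) (hN : 0 < N) (hk : k ≤ N) (p : ℝ) (hp0 : 0 ≤ p) (hp1 : p ≤ 1)
    (hq : (k : ℝ) / N ≤ p) :
    ∑ j ∈ range (k + 1), (N.choose j : ℝ) * p ^ j * (1 - p) ^ (N - j)
      ≤ exp (-2 * N * (p - k / N) ^ 2) := by
  have hNne : (N : ℝ) ≠ 0 := Nat.cast_ne_zero.2 hN.ne'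
  set d : ℝ := p - (k : ℝ) / N with hd
  have hd0 : 0 ≤ d := by simpa [hd] using hq
  set l : ℝ := 4 * d with hl
  have hl0 : 0 ≤ l := by positivity
  have tnonneg : ∀ j : ℕ, 0 ≤ (N.choose j : ℝ) * p ^ j * (1 - p) ^ (N - j) := by
    intro j
    have : (0:ℝ) ≤ 1 - p := by linarith
    positivity
  -- step A
  have stepA : ∑ j ∈ range (k + 1), (N.choose j : ℝ) * p ^ j * (1 - p) ^ (N - j)
      ≤ ∑ j ∈ range (N + 1),
          exp (l * ((k : ℝ) - j)) * ((N.choose j : ℝ) * p ^ j * (1 - p) ^ (N - j)) := by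
    have h1 : ∑ j ∈ range (k + 1), (N.choose j : ℝ) * p ^ j * (1 - p) ^ (N - j)
        ≤ ∑ j ∈ range (k + 1),
            exp (l * ((k : ℝ) - j)) * ((N.choose j : ℝ) * p ^ j * (1 - p) ^ (N - j)) := by
      refine Finset.sum_le_sum fun j hj => ?_
      have hjk : (j : ℝ) ≤ k := by
        exact_mod_cast Nat.lt_succ_iff.1 (Finset.mem_range.1 hj)
      have : (1 : ℝ) ≤ exp (l * ((k : ℝ) - j)) := by
        rw [Real.one_le_exp_iff]
        have : (0:ℝ) ≤ (k : ℝ) - j := by linarith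
        positivity
      nlinarith [tnonneg j]
    refine h1.trans (Finset.sum_le_sum_of_subset_of_nonneg ?_ fun j _ _ => ?_)
    · exact Finset.range_subset_range.2 (by omega)
    · exact mul_nonneg (exp_pos _).le (tnonneg j)
  -- step B : rewrite as power
  have stepB : ∑ j ∈ range (N + 1),
        exp (l * ((k : ℝ) - j)) * ((N.choose j : ℝ) * p ^ j * (1 - p) ^ (N - j))
      = exp (l * k) * (p * exp (-l) + (1 - p)) ^ N := by
    rw [add_pow, Finset.mul_sum]
    refine Finset.sum_congr rfl fun j hj => ?_
    have h1 : exp (l * ((k : ℝ) - j)) = exp (l * k) * exp (-l) ^ j := by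
      rw [← Real.exp_nat_mul, ← Real.exp_add]
      congr 1; ring
    rw [h1, mul_pow]
    ring
  have stepC : (p * exp (-l) + (1 - p)) ^ N ≤ exp (l ^ 2 / 8 - l * p) ^ N :=
    pow_le_pow_left₀ (two_point_pos p hp0 hp1 l) (hoeff_scalar p hp0 hp1 l hl0) N
  have hNd : (N : ℝ) * d = (N : ℝ) * p - k := by
    rw [hd]; field_simp
  have stepD : exp (l * k) * exp (l ^ 2 / 8 - l * p) ^ N = exp (-2 * N * d ^ 2) := by
    rw [← Real.exp_nat_mul, ← Real.exp_add]
    congr 1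
    rw [hl]
    linear_combination (4 * d) * hNd
  calc ∑ j ∈ range (k + 1), (N.choose j : ℝ) * p ^ j * (1 - p) ^ (N - j)
      ≤ ∑ j ∈ range (N + 1),
          exp (l * ((k : ℝ) - j)) * ((N.choose j : ℝ) * p ^ j * (1 - p) ^ (N - j)) := stepA
    _ = exp (l * k) * (p * exp (-l) + (1 - p)) ^ N := stepB
    _ ≤ exp (l * k) * exp (l ^ 2 / 8 - l * p) ^ N :=
        mul_le_mul_of_nonneg_left stepC (exp_pos _).le
    _ = exp (-2 * N * d ^ 2) := stepD

lemma tele (N : ℕ) (c : ℝ) : ∀ α : ℕ, α + 1 ≤ N →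
    ∑ j ∈ range (α + 1),
        ((N.choose j : ℝ) * (((j : ℝ) * c ^ (j - 1)) * (1 - c) ^ (N - j)
          + c ^ j * (-(((N - j : ℕ) : ℝ) * (1 - c) ^ (N - j - 1)))))
      = -(((N - α : ℕ) : ℝ) * (N.choose α) * c ^ α * (1 - c) ^ (N - 1 - α)) := by
  intro α
  induction α with
  | zero =>
    intro h
    simp
  | succ α IH =>
    intro h
    rw [Finset.sum_range_succ, IH (by omega)]
    obtain ⟨γ, rfl⟩ : ∃ γ, N = α + 2 + γ := ⟨N - (α + 2), by omega⟩
    have e1 : α + 2 + γ - α = γ + 2 := by omega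
    have e2 : α + 2 + γ - 1 - α = γ + 1 := by omega
    have e3 : α + 2 + γ - (α + 1) = γ + 1 := by omega
    have e4 : α + 2 + γ - (α + 1) - 1 = γ := by omega
    have e5 : α + 2 + γ - 1 - (α + 1) = γ := by omega
    have e6 : α + 1 - 1 = α := by omega
    rw [e1, e2, e4, e5, e3, e6]
    have hch := Nat.choose_succ_right_eq (α + 2 + γ) α
    rw [e1] at hch
    have hcast : ((α + 2 + γ).choose (α + 1) : ℝ) * ((α : ℝ) + 1)
        = ((α + 2 + γ).choose α : ℝ) * ((γ : ℝ) + 2) := by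
      exact_mod_cast congrArg (Nat.cast (R := ℝ)) hch
    push_cast
    linear_combination (c ^ α * (1 - c) ^ (γ + 1)) * hcast

lemma beta_int (α β : ℕ) (c : ℝ) :
    ∫ x in c..1, x ^ α * (1 - x) ^ β
      = ((α.factorial * β.factorial : ℝ) / (α + β + 1).factorial) *
          ∑ j ∈ range (α + 1),
            (((α + β + 1).choose j : ℝ) * c ^ j * (1 - c) ^ (α + β + 1 - j)) := by
  set N := α + β + 1 with hN
  set K : ℝ := (α.factorial * β.factorial : ℝ) / (N.factorial : ℝ) with hK
  set F : ℝ → ℝ := fun c => K * ∑ j ∈ range (α + 1),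
      ((N.choose j : ℝ) * c ^ j * (1 - c) ^ (N - j)) with hFdef
  have hKfac : K * (((β : ℝ) + 1) * (N.choose α : ℝ)) = 1 := by
    have hnat : N.choose α * α.factorial * (β + 1).factorial = N.factorial := by
      have := Nat.choose_mul_factorial_mul_factorial (show α ≤ N by omega)
      rwa [show N - α = β + 1 by omega] at this
    have hcast : (N.choose α : ℝ) * (α.factorial : ℝ) * ((β + 1).factorial : ℝ)
        = (N.factorial : ℝ) := by exact_mod_cast congrArg (Nat.cast (R := ℝ)) hnat
    rw [hK]
    have hfacpos : (0 : ℝ) < (N.factorial : ℝ) := by positivity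
    field_simp
    rw [Nat.factorial_succ] at hcast
    push_cast at hcast ⊢
    linear_combination hcast
  have hF : ∀ x : ℝ, HasDerivAt F (-(x ^ α * (1 - x) ^ β)) x := by
    intro x
    have hterm : ∀ j ∈ range (α + 1),
        HasDerivAt (fun c : ℝ => (N.choose j : ℝ) * (c ^ j * (1 - c) ^ (N - j)))
          ((N.choose j : ℝ) * (((j : ℝ) * x ^ (j - 1)) * (1 - x) ^ (N - j)
            + x ^ j * (-(((N - j : ℕ) : ℝ) * (1 - x) ^ (N - j - 1))))) x := by
      intro j _
      have h1 : HasDerivAt (fun c : ℝ => (1 - c) ^ (N - j))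
          (-(((N - j : ℕ) : ℝ) * (1 - x) ^ (N - j - 1))) x := by
        have := (hasDerivAt_pow (N - j) (1 - x)).comp x ((hasDerivAt_id x).const_sub 1)
        simpa [Function.comp_def, mul_comm, mul_assoc, mul_left_comm] using this
      exact ((hasDerivAt_pow j x).mul h1).const_mul _
    have hsum := (HasDerivAt.sum hterm).const_mul K
    have hvalue : K * (∑ j ∈ range (α + 1),
        ((N.choose j : ℝ) * (((j : ℝ) * x ^ (j - 1)) * (1 - x) ^ (N - j)
          + x ^ j * (-(((N - j : ℕ) : ℝ) * (1 - x) ^ (N - j - 1))))))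
        = -(x ^ α * (1 - x) ^ β) := by
      rw [tele N x α (by omega)]
      rw [show N - α = β + 1 by omega, show N - 1 - α = β by omega]
      have : K * (((β : ℝ) + 1) * (N.choose α : ℝ)) = 1 := hKfac
      push_cast
      linear_combination (-(x ^ α * (1 - x) ^ β)) * this
    rw [hvalue] at hsum
    simp only [← mul_assoc, Finset.sum_apply] at hsum
    exact hsum
  have hcont : Continuous fun x : ℝ => -(x ^ α * (1 - x) ^ β) := by continuity
  have hftc := intervalIntegral.integral_eq_sub_of_hasDerivAt
    (f := F) (f' := fun x => -(x ^ α * (1 - x) ^ β))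
    (fun x _ => hF x) (hcont.intervalIntegrable c 1)
  have hF1 : F 1 = 0 := by
    rw [hFdef]
    simp only
    rw [Finset.sum_eq_zero, mul_zero]
    intro j hj
    have : N - j ≠ 0 := by
      have := Finset.mem_range.1 hj; omega
    simp [zero_pow this]
  rw [intervalIntegral.integral_neg] at hftc
  have : ∫ x in c..1, x ^ α * (1 - x) ^ β = F c := by
    rw [hF1] at hftc; linarith
  rw [this, hFdef]

noncomputable def bK (α β : ℕ) : ℝ := (α.factorial * β.factorial : ℝ) / (α + β + 1).factorial

lemma bK_pos (α β : ℕ) : 0 < bK α β := by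
  unfold bK; positivity

lemma bK_symm (α β : ℕ) : bK α β = bK β α := by
  unfold bK; rw [mul_comm, add_comm α β]

-- normalization constant equals bK
lemma beta_norm (α β : ℕ) :
    (∫ s in Set.Ioo (0:ℝ) 1, s ^ ((((α:ℕ)+1 : ℕ):ℝ) - 1) * (1 - s) ^ ((((β:ℕ)+1 : ℕ):ℝ) - 1))
      = bK α β := by
  have h1 : (∫ s in Set.Ioo (0:ℝ) 1, s ^ ((((α:ℕ)+1 : ℕ):ℝ) - 1) * (1 - s) ^ ((((β:ℕ)+1 : ℕ):ℝ) - 1))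
      = ∫ s in Set.Ioo (0:ℝ) 1, s ^ α * (1 - s) ^ β := by
    refine setIntegral_congr_fun measurableSet_Ioo fun x hx => ?_
    have e1 : (((α:ℕ)+1 : ℕ):ℝ) - 1 = (α : ℝ) := by push_cast; ring
    have e2 : (((β:ℕ)+1 : ℕ):ℝ) - 1 = (β : ℝ) := by push_cast; ring
    rw [e1, e2, Real.rpow_natCast, Real.rpow_natCast]
  rw [h1, ← integral_Ioc_eq_integral_Ioo,
    ← intervalIntegral.integral_of_le (zero_le_one (α := ℝ))]
  rw [beta_int α β 0]
  have hS0 : ∑ j ∈ range (α + 1),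
      (((α + β + 1).choose j : ℝ) * (0:ℝ) ^ j * (1 - 0) ^ (α + β + 1 - j)) = 1 := by
    rw [Finset.sum_eq_single 0]
    · simp
    · intro j _ hj
      simp [zero_pow hj]
    · intro h; exact absurd (Finset.mem_range.2 (by omega)) h
  rw [hS0, mul_one]
  rfl

-- general set computation
lemma betaMeasure_set (α β : ℕ) (s : Set ℝ) (hs : MeasurableSet s) :
    betaMeasure ((α : ℕ)+1) ((β : ℕ)+1) s
      = ∫⁻ x in s ∩ Set.Ioo (0:ℝ) 1,
          ENNReal.ofReal ((x ^ α * (1 - x) ^ β) / bK α β) := by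
  rw [betaMeasure, withDensity_apply _ hs]
  have hind : ∀ x : ℝ, ENNReal.ofReal ((Set.Ioo (0:ℝ) 1).indicator
      (fun t => t ^ ((((α:ℕ)+1:ℕ):ℝ) - 1) * (1 - t) ^ ((((β:ℕ)+1:ℕ):ℝ) - 1) /
        ∫ u in Set.Ioo (0:ℝ) 1, u ^ ((((α:ℕ)+1:ℕ):ℝ) - 1) * (1 - u) ^ ((((β:ℕ)+1:ℕ):ℝ) - 1)) x)
      = (Set.Ioo (0:ℝ) 1).indicator
          (fun t => ENNReal.ofReal (t ^ ((((α:ℕ)+1:ℕ):ℝ) - 1) * (1 - t) ^ ((((β:ℕ)+1:ℕ):ℝ) - 1) /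
            ∫ u in Set.Ioo (0:ℝ) 1, u ^ ((((α:ℕ)+1:ℕ):ℝ) - 1) * (1 - u) ^ ((((β:ℕ)+1:ℕ):ℝ) - 1))) x := by
    intro x
    by_cases hx : x ∈ Set.Ioo (0:ℝ) 1 <;> simp [hx]
  push_cast
  push_cast at hind
  simp_rw [hind]
  rw [lintegral_indicator measurableSet_Ioo, Measure.restrict_restrict measurableSet_Ioo,
    Set.inter_comm]
  refine setLIntegral_congr_fun (hs.inter measurableSet_Ioo) (fun x hx => ?_)
  congr 1
  have hx2 := hx.2
  have hnorm := beta_norm α β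
  push_cast at hnorm
  rw [hnorm]
  have e1 : ((α:ℝ) + 1) - 1 = ((α:ℕ) : ℝ) := by push_cast; ring
  have e2 : ((β:ℝ) + 1) - 1 = ((β:ℕ) : ℝ) := by push_cast; ring
  rw [e1, e2, Real.rpow_natCast, Real.rpow_natCast]

-- lintegral over an Ioo inside (0,1) as a real integral
lemma lint_Ioo (α β : ℕ) (u v : ℝ) (h0 : 0 ≤ u) (huv : u ≤ v) (h1 : v ≤ 1) :
    ∫⁻ x in Set.Ioo u v, ENNReal.ofReal ((x ^ α * (1 - x) ^ β) / bK α β)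
      = ENNReal.ofReal ((∫ x in u..v, x ^ α * (1 - x) ^ β) / bK α β) := by
  have hcont : Continuous fun x : ℝ => (x ^ α * (1 - x) ^ β) / bK α β :=
    (by continuity : Continuous fun x : ℝ => x ^ α * (1 - x) ^ β).div_const _
  have hint : IntegrableOn (fun x : ℝ => (x ^ α * (1 - x) ^ β) / bK α β) (Set.Ioo u v) :=
    (hcont.integrableOn_Icc).mono_set Set.Ioo_subset_Icc_self
  have hnn : 0 ≤ᵐ[volume.restrict (Set.Ioo u v)]
      fun x : ℝ => (x ^ α * (1 - x) ^ β) / bK α β := by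
    refine (ae_restrict_iff' measurableSet_Ioo).2 (ae_of_all _ fun x hx => ?_)
    have h3 : 0 ≤ x := le_of_lt (lt_of_le_of_lt h0 hx.1)
    have h4 : 0 ≤ 1 - x := by have := hx.2; linarith
    have := bK_pos α β
    positivity
  rw [← ofReal_integral_eq_lintegral_ofReal hint hnn]
  congr 1
  rw [MeasureTheory.integral_div, intervalIntegral.integral_of_le huv,
    integral_Ioc_eq_integral_Ioo]

-- right tail, 0 < c < 1
lemma betaMeasure_tail (α β : ℕ) (c : ℝ) (h0 : 0 < c) (h1 : c < 1) :
    betaMeasure ((α : ℕ)+1) ((β : ℕ)+1) {x | c ≤ x}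
      = ENNReal.ofReal (∑ j ∈ range (α + 1),
          (((α + β + 1).choose j : ℝ) * c ^ j * (1 - c) ^ (α + β + 1 - j))) := by
  have hset : {x : ℝ | c ≤ x} = Set.Ici c := rfl
  rw [hset, betaMeasure_set α β _ measurableSet_Ici]
  have h2 : Set.Ici c ∩ Set.Ioo (0:ℝ) 1 = Set.Ico c 1 := by
    ext x
    simp only [Set.mem_inter_iff, Set.mem_Ici, Set.mem_Ioo, Set.mem_Ico]
    constructor
    · rintro ⟨hx1, _, hx3⟩; exact ⟨hx1, hx3⟩
    · rintro ⟨hx1, hx2⟩; exact ⟨hx1, lt_of_lt_of_le h0 hx1, hx2⟩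
  rw [h2, setLIntegral_congr (Ioo_ae_eq_Ico (a := c) (b := 1)).symm,
    lint_Ioo α β c 1 h0.le h1.le le_rfl, beta_int α β c]
  have hbk : (α.factorial * β.factorial : ℝ) / (α + β + 1).factorial = bK α β := rfl
  rw [hbk, mul_comm (bK α β), mul_div_assoc, div_self (bK_pos α β).ne', mul_one]

-- right tail, c ≥ 1 : zero
lemma betaMeasure_tail_one (α β : ℕ) (c : ℝ) (h1 : 1 ≤ c) :
    betaMeasure ((α : ℕ)+1) ((β : ℕ)+1) {x | c ≤ x} = 0 := by
  have hset : {x : ℝ | c ≤ x} = Set.Ici c := rfl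
  rw [hset, betaMeasure_set α β _ measurableSet_Ici]
  have h2 : Set.Ici c ∩ Set.Ioo (0:ℝ) 1 = ∅ := by
    ext x
    simp only [Set.mem_inter_iff, Set.mem_Ici, Set.mem_Ioo, Set.mem_empty_iff_false,
      iff_false, not_and]
    intro hx1 hx2
    intro h; linarith
  rw [h2]
  simp

-- left tail, c ≤ 0 : zero
lemma betaMeasure_left_zero (α β : ℕ) (c : ℝ) (h1 : c ≤ 0) :
    betaMeasure ((α : ℕ)+1) ((β : ℕ)+1) {x | x ≤ c} = 0 := by
  have hset : {x : ℝ | x ≤ c} = Set.Iic c := rfl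
  rw [hset, betaMeasure_set α β _ measurableSet_Iic]
  have h2 : Set.Iic c ∩ Set.Ioo (0:ℝ) 1 = ∅ := by
    ext x
    simp only [Set.mem_inter_iff, Set.mem_Iic, Set.mem_Ioo, Set.mem_empty_iff_false,
      iff_false, not_and]
    intro hx1 hx2
    intro h; linarith
  rw [h2]
  simp

-- left tail equals right tail of swapped parameters
lemma betaMeasure_left_eq (α β : ℕ) (c : ℝ) (h0 : 0 < c) (h1 : c < 1) :
    betaMeasure ((α : ℕ)+1) ((β : ℕ)+1) {x | x ≤ c}
      = betaMeasure ((β : ℕ)+1) ((α : ℕ)+1) {x | 1 - c ≤ x} := by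
  have hset : {x : ℝ | x ≤ c} = Set.Iic c := rfl
  have hset2 : {x : ℝ | 1 - c ≤ x} = Set.Ici (1 - c) := rfl
  rw [hset, hset2, betaMeasure_set α β _ measurableSet_Iic,
    betaMeasure_set β α _ measurableSet_Ici]
  have h2 : Set.Iic c ∩ Set.Ioo (0:ℝ) 1 = Set.Ioc 0 c := by
    ext x
    simp only [Set.mem_inter_iff, Set.mem_Iic, Set.mem_Ioo, Set.mem_Ioc]
    constructor
    · rintro ⟨hx1, hx2, _⟩; exact ⟨hx2, hx1⟩
    · rintro ⟨hx1, hx2⟩; exact ⟨hx2, hx1, lt_of_le_of_lt hx2 h1⟩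
  have h3 : Set.Ici (1-c) ∩ Set.Ioo (0:ℝ) 1 = Set.Ico (1-c) 1 := by
    ext x
    simp only [Set.mem_inter_iff, Set.mem_Ici, Set.mem_Ioo, Set.mem_Ico]
    constructor
    · rintro ⟨hx1, _, hx3⟩; exact ⟨hx1, hx3⟩
    · rintro ⟨hx1, hx2⟩; exact ⟨hx1, lt_of_lt_of_le (by linarith) hx1, hx2⟩
  rw [h2, h3, setLIntegral_congr (Ioo_ae_eq_Ioc (a := (0:ℝ)) (b := c)).symm,
    setLIntegral_congr (Ioo_ae_eq_Ico (a := 1-c) (b := 1)).symm,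
    lint_Ioo α β 0 c le_rfl h0.le h1.le,
    lint_Ioo β α (1-c) 1 (by linarith) (by linarith) le_rfl]
  congr 1
  rw [bK_symm α β]
  congr 1
  have hsub := intervalIntegral.integral_comp_sub_left
    (fun x : ℝ => x ^ β * (1 - x) ^ α) 1 (a := 0) (b := c)
  simp only [sub_zero] at hsub
  rw [← hsub]
  refine intervalIntegral.integral_congr fun x _ => ?_
  ring_nf

lemma tail_le (α β : ℕ) (c : ℝ) (hc : ((α:ℝ)+1)/((α:ℝ)+(β:ℝ)+2) ≤ c) :
    betaMeasure ((α : ℕ)+1) ((β : ℕ)+1) {x | c ≤ x}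
      ≤ ENNReal.ofReal (Real.exp
          (-2*((α:ℝ)+(β:ℝ)+2)*(c - ((α:ℝ)+1)/((α:ℝ)+(β:ℝ)+2))^2)) := by
  set Nr : ℝ := (α:ℝ) + (β:ℝ) + 1 with hNr
  have hNr1 : (1:ℝ) ≤ Nr := by
    have h1 : (0:ℝ) ≤ (α:ℝ) := Nat.cast_nonneg α
    have h2 : (0:ℝ) ≤ (β:ℝ) := Nat.cast_nonneg β
    rw [hNr]; linarith
  set m : ℝ := ((α:ℝ)+1)/((α:ℝ)+(β:ℝ)+2) with hmdef
  have hm0 : 0 < m := by rw [hmdef]; positivity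
  by_cases hc1 : c < 1
  · have h0c : 0 < c := lt_of_lt_of_le hm0 hc
    rw [betaMeasure_tail α β c h0c hc1]
    apply ENNReal.ofReal_le_ofReal
    set q : ℝ := (α:ℝ) / Nr with hqdef
    have hqm : q ≤ m := by
      rw [hqdef, hmdef, hNr, div_le_div_iff₀ (by positivity) (by positivity)]
      nlinarith [Nat.cast_nonneg (α := ℝ) α, Nat.cast_nonneg (α := ℝ) β]
    have hq : ((α:ℕ):ℝ) / ((α + β + 1 : ℕ):ℝ) ≤ c := by
      push_cast
      calc (α:ℝ)/((α:ℝ)+(β:ℝ)+1) = q := by rw [hqdef, hNr]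
        _ ≤ m := hqm
        _ ≤ c := hc
    have hbin := binom_tail (α + β + 1) α (by omega) (by omega) c h0c.le hc1.le hq
    refine hbin.trans (Real.exp_le_exp.2 ?_)
    push_cast
    set d : ℝ := c - m with hd
    have hd0 : 0 ≤ d := by rw [hd]; linarith
    set e : ℝ := m - q with he
    have he0 : 0 ≤ e := by rw [he]; linarith
    have hdNe : d ≤ Nr * e := by
      have h1m : Nr * e = 1 - m := by
        rw [he, hqdef, hmdef, hNr]
        field_simp
        ring
      rw [h1m, hd]; linarith
    have hrw1 : c - (α:ℝ)/((α:ℝ)+(β:ℝ)+1) = d + e := by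
      rw [hd, he, hqdef, hNr]; ring
    rw [hrw1]
    have key : ((α:ℝ)+(β:ℝ)+2) * d^2 ≤ ((α:ℝ)+(β:ℝ)+1) * (d+e)^2 := by
      have h2 : Nr * (d+e)^2 - (Nr + 1) * d^2 = 2*Nr*d*e + Nr*e^2 - d^2 := by ring
      have h3 : d * d ≤ d * (Nr * e) := mul_le_mul_of_nonneg_left hdNe hd0
      nlinarith [mul_nonneg (mul_nonneg (by linarith : (0:ℝ) ≤ Nr) hd0) he0,
        mul_nonneg (by linarith : (0:ℝ) ≤ Nr) (sq_nonneg e)]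
    linarith [key]
  · push_neg at hc1
    rw [betaMeasure_tail_one α β c hc1]
    exact zero_le

lemma left_le (α β : ℕ) (c : ℝ) (hc : c ≤ ((α:ℝ)+1)/((α:ℝ)+(β:ℝ)+2)) :
    betaMeasure ((α : ℕ)+1) ((β : ℕ)+1) {x | x ≤ c}
      ≤ ENNReal.ofReal (Real.exp
          (-2*((α:ℝ)+(β:ℝ)+2)*(c - ((α:ℝ)+1)/((α:ℝ)+(β:ℝ)+2))^2)) := by
  set m : ℝ := ((α:ℝ)+1)/((α:ℝ)+(β:ℝ)+2) with hmdef
  have hm1 : m < 1 := by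
    rw [hmdef, div_lt_one (by positivity)]
    have := Nat.cast_nonneg (α := ℝ) β
    linarith
  by_cases hc0 : c ≤ 0
  · rw [betaMeasure_left_zero α β c hc0]
    exact zero_le
  · push_neg at hc0
    have hc1 : c < 1 := lt_of_le_of_lt hc hm1
    rw [betaMeasure_left_eq α β c hc0 hc1]
    have hm' : ((β:ℝ)+1)/((β:ℝ)+(α:ℝ)+2) = 1 - m := by
      rw [hmdef]
      field_simp
      ring
    have happ := tail_le β α (1 - c) (by rw [hm']; linarith)
    refine happ.trans (le_of_eq ?_)
    congr 1
    rw [hm']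
    ring

set_option maxHeartbeats 2000000 in
/-- A `Beta(a,b)` random variable (integer parameters) with mean `m = a/(a+b)`
satisfies the Hoeffding-type bound `P(X ≥ (1+ε)m) ≤ exp(−2(a+b)ε²m²)` for any `ε > 0`; this
implies that for `aₙ/n → t ∈ (0,1)`, `Beta(aₙ, n+1−aₙ)` concentrates around `t`. -/
theorem beta_hoeffding_concentration
    (a b : ℕ) (ha : 1 ≤ a) (hb : 1 ≤ b) (ε : ℝ) (hε : 0 < ε)
    (m : ℝ) (hm : m = (a : ℝ) / (a + b)) :
    betaMeasure a b {x | (1 + ε) * m ≤ x}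
        ≤ ENNReal.ofReal (Real.exp (-2 * ((a : ℝ) + b) * ε ^ 2 * m ^ 2)) ∧
      ∀ t ∈ Set.Ioo (0 : ℝ) 1, ∀ A : ℕ → ℕ, (∀ n, 1 ≤ A n) →
        Tendsto (fun n : ℕ => (A n : ℝ) / n) atTop (nhds t) →
        ∀ δ > 0,
          Tendsto (fun n : ℕ => betaMeasure (A n) ((n : ℝ) + 1 - (A n : ℝ)) {x | δ < |x - t|})
            atTop (nhds 0) := by
  constructor
  · -- Part 1
    obtain ⟨α, rfl⟩ : ∃ α, a = α + 1 := ⟨a - 1, by omega⟩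
    obtain ⟨β, rfl⟩ : ∃ β, b = β + 1 := ⟨b - 1, by omega⟩
    have hm2 : m = ((α:ℝ)+1)/((α:ℝ)+(β:ℝ)+2) := by
      rw [hm]; push_cast; ring_nf
    have hm0 : 0 < m := by rw [hm2]; positivity
    have hc : ((α:ℝ)+1)/((α:ℝ)+(β:ℝ)+2) ≤ (1 + ε) * m := by
      rw [← hm2]; nlinarith
    push_cast
    refine (tail_le α β ((1+ε)*m) hc).trans (le_of_eq ?_)
    congr 1
    rw [hm2]
    ring
  · -- Part 2
    rintro t ⟨ht0, ht1⟩ A hA hlim δ hδ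
    have hdivlim : Tendsto (fun n : ℕ => ((n:ℝ)/((n:ℝ)+1))) atTop (nhds 1) :=
      tendsto_natCast_div_add_atTop (1 : ℝ)
    have hmean : Tendsto (fun n : ℕ => (A n : ℝ)/((n:ℝ)+1)) atTop (nhds t) := by
      have h2 := hlim.mul hdivlim
      rw [mul_one] at h2
      refine h2.congr' ?_
      filter_upwards [eventually_gt_atTop 0] with n hn
      have hne : (n:ℝ) ≠ 0 := Nat.cast_ne_zero.2 hn.ne'
      field_simp
    have hevA : ∀ᶠ n : ℕ in atTop, A n ≤ n := by
      have h1 : ∀ᶠ n : ℕ in atTop, (A n:ℝ)/(n:ℝ) < (1+t)/2 :=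
        hlim.eventually_lt_const (by linarith)
      filter_upwards [h1, eventually_gt_atTop 0] with n h1n h2n
      have hnpos : (0:ℝ) < (n:ℝ) := by exact_mod_cast h2n
      by_contra hcon
      push_neg at hcon
      have : (n:ℝ) < (A n : ℝ) := by exact_mod_cast hcon
      have : (1:ℝ) < (A n:ℝ)/(n:ℝ) := by
        rw [lt_div_iff₀ hnpos]; linarith
      linarith
    have hev2 : ∀ᶠ n : ℕ in atTop, |(A n : ℝ)/((n:ℝ)+1) - t| < δ/2 :=
      hmean.eventually (eventually_abs_sub_lt t (half_pos hδ))
    set B : ℕ → ENNReal := fun n => ENNReal.ofReal (Real.exp (-(((n:ℝ)+1) * (δ^2/2))))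
      with hBdef
    have hbound : ∀ᶠ n : ℕ in atTop,
        betaMeasure (A n) ((n : ℝ) + 1 - (A n : ℝ)) {x | δ < |x - t|} ≤ 2 * B n := by
      filter_upwards [hevA, hev2] with n hAn hmn
      obtain ⟨α, hα⟩ : ∃ α, A n = α + 1 := ⟨A n - 1, by have := hA n; omega⟩
      obtain ⟨β, hβ⟩ : ∃ β, n + 1 - A n = β + 1 := ⟨n - A n, by omega⟩
      have hab : α + β + 2 = n + 1 := by omega
      have habr : (α:ℝ) + (β:ℝ) + 2 = (n:ℝ) + 1 := by exact_mod_cast congrArg (Nat.cast (R := ℝ)) hab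
      have hαr : (A n : ℝ) = (α:ℝ) + 1 := by exact_mod_cast congrArg (Nat.cast (R := ℝ)) hα
      have hbr : (n:ℝ) + 1 - (A n : ℝ) = (β:ℝ) + 1 := by
        rw [hαr]; linarith
      rw [hbr, hαr]
      set m' : ℝ := ((α:ℝ)+1)/((α:ℝ)+(β:ℝ)+2) with hm'def
      have hm'eq : m' = (A n : ℝ)/((n:ℝ)+1) := by
        rw [hm'def, habr, hαr]
      have hm'near : |m' - t| < δ/2 := by rw [hm'eq]; exact hmn
      have habs := abs_lt.1 hm'near
      have hsub : {x : ℝ | δ < |x - t|} ⊆ {x : ℝ | t + δ ≤ x} ∪ {x : ℝ | x ≤ t - δ} := by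
        intro x hx
        simp only [Set.mem_setOf_eq] at hx
        rcases lt_abs.1 hx with h | h
        · left; simp only [Set.mem_setOf_eq]; linarith
        · right; simp only [Set.mem_setOf_eq]; linarith
      refine (measure_mono hsub).trans ((measure_union_le _ _).trans ?_)
      have h1 := tail_le α β (t + δ) (by rw [← hm'def]; linarith)
      have h2 := left_le α β (t - δ) (by rw [← hm'def]; linarith)
      have hnn : (0:ℝ) ≤ (n:ℝ) := Nat.cast_nonneg n
      have hb1 : ENNReal.ofReal (Real.exp
          (-2*((α:ℝ)+(β:ℝ)+2)*((t+δ) - ((α:ℝ)+1)/((α:ℝ)+(β:ℝ)+2))^2)) ≤ B n := by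
        rw [hBdef]
        apply ENNReal.ofReal_le_ofReal
        apply Real.exp_le_exp.2
        rw [← hm'def, habr]
        have hge : δ/2 ≤ t + δ - m' := by linarith
        have hu2 : δ^2/4 ≤ (t + δ - m')^2 := by nlinarith
        have hn1 : (0:ℝ) ≤ (n:ℝ) + 1 := by linarith
        linarith [mul_nonneg hn1 (by linarith : (0:ℝ) ≤ (t + δ - m')^2 - δ^2/4)]
      have hb2 : ENNReal.ofReal (Real.exp
          (-2*((α:ℝ)+(β:ℝ)+2)*((t-δ) - ((α:ℝ)+1)/((α:ℝ)+(β:ℝ)+2))^2)) ≤ B n := by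
        rw [hBdef]
        apply ENNReal.ofReal_le_ofReal
        apply Real.exp_le_exp.2
        rw [← hm'def, habr]
        have hge : δ/2 ≤ m' - (t - δ) := by linarith
        have hu2 : δ^2/4 ≤ ((t - δ) - m')^2 := by nlinarith
        have hn1 : (0:ℝ) ≤ (n:ℝ) + 1 := by linarith
        linarith [mul_nonneg hn1 (by linarith : (0:ℝ) ≤ ((t - δ) - m')^2 - δ^2/4)]
      refine le_trans (add_le_add (h1.trans hb1) (h2.trans hb2)) (le_of_eq (two_mul _).symm)
    have hBlim : Tendsto (fun n => 2 * B n) atTop (nhds 0) := by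
      have hpos : Tendsto (fun n : ℕ => ((n:ℝ)+1)*(δ^2/2)) atTop atTop :=
        (Filter.tendsto_atTop_add_const_right atTop 1
          tendsto_natCast_atTop_atTop).atTop_mul_const (by positivity)
      have harg : Tendsto (fun n : ℕ => -(((n:ℝ)+1)*(δ^2/2))) atTop atBot :=
        Filter.tendsto_neg_atBot_iff.2 hpos
      have hexp : Tendsto (fun n : ℕ => Real.exp (-(((n:ℝ)+1)*(δ^2/2)))) atTop (nhds 0) :=
        Real.tendsto_exp_atBot.comp harg
      have hof := ENNReal.tendsto_ofReal hexp
      rw [ENNReal.ofReal_zero] at hof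
      have := ENNReal.Tendsto.const_mul (a := 2) hof (Or.inr (by simp))
      simpa using this
    exact tendsto_of_tendsto_of_tendsto_of_le_of_le' tendsto_const_nhds hBlim
      (Eventually.of_forall fun n => zero_le) hbound
end
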